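/- arXiv:1507.08436 — 8 statements merged into one kernel-verified Lean document; each statement's English description precedes it below -/
import Mathlib

section
/- (Proposition 1, Equivalence.) Let ρ ∈ ℝ and let g be continuous and strictly positive on [A₀,∞) for some constant A₀. Then g is log-regularly varying at ∞ with index ρ if and only if there exist a constant A > 1 and a function s that is log-slowly varying at ∞ such that for all z ≥ A one has g(z) = (log z)^{−ρ} s(z). -/
open Real Set

/-- A function `g` is log-regularly varying at `∞` with index `ρ`:
for every `ε > 0` and `τ ≥ 1` there is `A(ε,τ) > 0` such that
`z ≥ A` and `1/τ ≤ ν ≤ τ` imply `|ν^ρ g(z^ν)/g(z) − 1| < ε`. -/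
def LogRegVarying (g : ℝ → ℝ) (ρ : ℝ) : Prop :=
  ∀ ε : ℝ, 0 < ε → ∀ τ : ℝ, 1 ≤ τ →
    ∃ A : ℝ, 0 < A ∧ ∀ z : ℝ, A ≤ z → ∀ ν : ℝ, 1 / τ ≤ ν → ν ≤ τ →
      |ν ^ ρ * g (z ^ ν) / g z - 1| < ε

lemma cancel_aux (a b c d : ℝ) (ha : a ≠ 0) : (c * (a * b)) / (a * d) = c * b / d := by
  rw [show c * (a * b) = a * (c * b) by ring, mul_div_mul_left _ _ ha, mul_div_assoc]

/-- Proposition 1 (Equivalence): `g ∈ L_ρ(∞)` iff there are `A > 1` and a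
log-slowly varying `s` with `g(z) = (log z)^{-ρ} s(z)` for all `z ≥ A`. -/
theorem statement0 (ρ : ℝ) (g : ℝ → ℝ) (A₀ : ℝ)
    (hg_cont : ContinuousOn g (Set.Ici A₀)) (hg_pos : ∀ z ∈ Set.Ici A₀, 0 < g z) :
    LogRegVarying g ρ ↔
      ∃ A : ℝ, 1 < A ∧ ∃ s : ℝ → ℝ, LogRegVarying s 0 ∧
        ∀ z : ℝ, A ≤ z → g z = (Real.log z) ^ (-ρ) * s z := by
  constructor
  · intro hg
    refine ⟨Real.exp 1, by
      have := Real.exp_one_gt_d9; linarith, fun z => (Real.log z) ^ ρ * g z, ?_, ?_⟩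
    · intro ε hε τ hτ
      obtain ⟨A₁, hA₁, hA⟩ := hg ε hε τ hτ
      refine ⟨max A₁ (Real.exp 1), lt_max_of_lt_left hA₁, ?_⟩
      intro z hz ν hν1 hν2
      have hτ0 : (0:ℝ) < τ := by linarith
      have hν : (0:ℝ) < ν := lt_of_lt_of_le (by positivity) hν1
      have hze : Real.exp 1 ≤ z := le_trans (le_max_right _ _) hz
      have hz1 : (1:ℝ) < z := lt_of_lt_of_le (by
        have := Real.exp_one_gt_d9; linarith) hze
      have hz0 : (0:ℝ) < z := by linarith
      have hlog : 0 < Real.log z := Real.log_pos hz1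
      have hL : (Real.log z) ^ ρ ≠ 0 := (Real.rpow_pos_of_pos hlog ρ).ne'
      have key : ν ^ (0:ℝ) * (Real.log (z ^ ν) ^ ρ * g (z ^ ν)) / (Real.log z ^ ρ * g z)
          = ν ^ ρ * g (z ^ ν) / g z := by
        rw [Real.rpow_zero, one_mul, Real.log_rpow hz0,
          Real.mul_rpow hν.le hlog.le, mul_assoc, cancel_aux _ _ _ _ hL]
      rw [key]
      exact hA z (le_trans (le_max_left _ _) hz) ν hν1 hν2
    · intro z hz
      have hz1 : (1:ℝ) < z := lt_of_lt_of_le (by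
        have := Real.exp_one_gt_d9; linarith) hz
      have hlog : 0 < Real.log z := Real.log_pos hz1
      rw [← mul_assoc, ← Real.rpow_add hlog, neg_add_cancel, Real.rpow_zero, one_mul]
  · rintro ⟨A, hA, s, hs, hrep⟩
    intro ε hε τ hτ
    obtain ⟨A₁, hA₁, hS⟩ := hs ε hε τ hτ
    have hτ0 : (0:ℝ) < τ := by linarith
    refine ⟨max A₁ (A ^ τ), lt_max_of_lt_left hA₁, ?_⟩
    intro z hz ν hν1 hν2
    have hν : (0:ℝ) < ν := lt_of_lt_of_le (by positivity) hν1
    have hA0 : (0:ℝ) < A := by linarith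
    have hAz : A ^ τ ≤ z := le_trans (le_max_right _ _) hz
    have hAA : A ≤ A ^ τ := by
      calc A = A ^ (1:ℝ) := (Real.rpow_one A).symm
        _ ≤ A ^ τ := Real.rpow_le_rpow_of_exponent_le hA.le hτ
    have hzA : A ≤ z := le_trans hAA hAz
    have hz1 : (1:ℝ) < z := lt_of_lt_of_le hA hzA
    have hz0 : (0:ℝ) < z := by linarith
    have hzνA : A ≤ z ^ ν := by
      calc A = (A ^ τ) ^ (1/τ : ℝ) := by
            rw [← Real.rpow_mul hA0.le, mul_one_div, div_self hτ0.ne', Real.rpow_one]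
        _ ≤ z ^ (1/τ : ℝ) := Real.rpow_le_rpow (by positivity) hAz (by positivity)
        _ ≤ z ^ ν := Real.rpow_le_rpow_of_exponent_le hz1.le hν1
    have hlog : 0 < Real.log z := Real.log_pos hz1
    have hL : (Real.log z) ^ (-ρ) ≠ 0 := (Real.rpow_pos_of_pos hlog _).ne'
    rw [hrep z hzA, hrep _ hzνA, Real.log_rpow hz0, Real.mul_rpow hν.le hlog.le,
      mul_assoc, ← mul_assoc (ν ^ ρ), ← Real.rpow_add hν, add_neg_cancel,
      cancel_aux _ _ _ _ hL]
    exact hS z (le_trans (le_max_left _ _) hz) ν hν1 hν2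
end

section
/- (Proposition 3, Integrability, cases ρ ≠ 1.) Let g be log-regularly varying at ∞ with index ρ. If ρ > 1, then there exists a constant A > 0 such that z ↦ (1/z)g(z) is integrable on [A,∞). If ρ < 1, then for every A > 0 the function z ↦ (1/z)g(z) is not integrable on [A,∞). -/
open Real Set MeasureTheory

lemma geom_upper {G : ℕ → ℝ} {r : ℝ} (hr : 0 < r) (h : ∀ n, G (n+1) ≤ r * G n) :
    ∀ n, G n ≤ r^n * G 0 := by
  intro n
  induction n with
  | zero => simp
  | succ k ih =>
    calc G (k+1) ≤ r * G k := h k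
    _ ≤ r * (r^k * G 0) := by nlinarith
    _ = r^(k+1) * G 0 := by ring

lemma geom_lower {G : ℕ → ℝ} {r : ℝ} (hr : 0 < r) (h : ∀ n, r * G n ≤ G (n+1)) :
    ∀ n, r^n * G 0 ≤ G n := by
  intro n
  induction n with
  | zero => simp
  | succ k ih =>
    calc r^(k+1) * G 0 = r * (r^k * G 0) := by ring
    _ ≤ r * G k := by nlinarith
    _ ≤ G (k+1) := h k

noncomputable def zs (z₀ : ℝ) (n : ℕ) : ℝ := z₀ ^ ((2:ℝ) ^ n)

lemma zs_zero (z₀ : ℝ) : zs z₀ 0 = z₀ := by simp [zs]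

lemma zs_succ (z₀ : ℝ) (hz₀ : 0 ≤ z₀) (n : ℕ) : zs z₀ (n+1) = (zs z₀ n) ^ (2:ℝ) := by
  rw [zs, zs, ← Real.rpow_mul hz₀, pow_succ]

lemma zs_pos {z₀ : ℝ} (h : 0 < z₀) (n : ℕ) : 0 < zs z₀ n := Real.rpow_pos_of_pos h _

lemma one_lt_zs {z₀ : ℝ} (h : 1 < z₀) (n : ℕ) : 1 < zs z₀ n :=
  Real.one_lt_rpow_iff_of_pos (by linarith) |>.2 (Or.inl ⟨h, by positivity⟩)

lemma zs_le {z₀ : ℝ} (h : 1 ≤ z₀) (n : ℕ) : z₀ ≤ zs z₀ n := by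
  nth_rewrite 1 [← Real.rpow_one z₀]
  exact Real.rpow_le_rpow_of_exponent_le h (one_le_pow₀ (by norm_num))

lemma log_zs {z₀ : ℝ} (h : 0 < z₀) (n : ℕ) : Real.log (zs z₀ n) = 2^n * Real.log z₀ :=
  Real.log_rpow h _

lemma zs_lt_succ {z₀ : ℝ} (h : 1 < z₀) (n : ℕ) : zs z₀ n < zs z₀ (n+1) :=
  Real.rpow_lt_rpow_of_exponent_lt h (by
    apply pow_lt_pow_right₀ <;> norm_num)

lemma chunk_nu {v w : ℝ} (hv : 1 < v) (h1 : v ≤ w) (h2 : Real.log w ≤ 2 * Real.log v) :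
    ∃ ν : ℝ, 1 ≤ ν ∧ ν ≤ 2 ∧ v ^ ν = w := by
  have hlv : 0 < Real.log v := Real.log_pos hv
  have hw0 : (0:ℝ) < w := by linarith
  refine ⟨Real.log w / Real.log v, ?_, ?_, ?_⟩
  · rw [le_div_iff₀ hlv, one_mul]
    exact Real.log_le_log (by linarith) h1
  · rw [div_le_iff₀ hlv]; linarith
  · rw [Real.rpow_def_of_pos (by linarith), mul_div_cancel₀ _ (ne_of_gt hlv), Real.exp_log hw0]

lemma getB {g : ℝ → ℝ} {ρ ε : ℝ}
    {u ν : ℝ} (hgu : 0 < g u)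
    (h : |ν ^ ρ * g (u ^ ν) / g u - 1| < ε) (hν1 : 1 ≤ ν) :
    (1-ε) * g u / ν^ρ < g (u^ν) ∧ g (u^ν) < (1+ε) * g u / ν^ρ := by
  have hν0 : (0:ℝ) < ν := by linarith
  have hνρ : 0 < ν ^ ρ := Real.rpow_pos_of_pos hν0 ρ
  rw [abs_lt] at h
  obtain ⟨h1, h2⟩ := h
  constructor
  · rw [div_lt_iff₀ hνρ]
    have : (1-ε) * g u < ν ^ ρ * g (u ^ ν) := by
      have := (lt_div_iff₀ hgu).mp (by linarith : 1 - ε < ν ^ ρ * g (u ^ ν) / g u)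
      linarith
    linarith [mul_comm (ν^ρ) (g (u^ν))]
  · rw [lt_div_iff₀ hνρ]
    have : ν ^ ρ * g (u ^ ν) < (1+ε) * g u := by
      have := (div_lt_iff₀ hgu).mp (by linarith : ν ^ ρ * g (u ^ ν) / g u < 1 + ε)
      linarith
    linarith [mul_comm (ν^ρ) (g (u^ν))]

lemma nu_rho_bounds {ν ρ : ℝ} (hν1 : 1 ≤ ν) (hν2 : ν ≤ 2) :
    ν ^ ρ ≤ (2:ℝ) ^ |ρ| ∧ ((2:ℝ) ^ |ρ|)⁻¹ ≤ ν ^ ρ := by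
  have hM1 : (1:ℝ) ≤ (2:ℝ) ^ |ρ| := Real.one_le_rpow one_le_two (abs_nonneg ρ)
  rcases le_or_gt 0 ρ with hρ | hρ
  · rw [abs_of_nonneg hρ]
    constructor
    · exact Real.rpow_le_rpow (by linarith) hν2 hρ
    · have h1 : (1:ℝ) ≤ ν ^ ρ := Real.one_le_rpow hν1 hρ
      have : ((2:ℝ) ^ ρ)⁻¹ ≤ 1 := by
        rw [abs_of_nonneg hρ] at hM1
        exact inv_le_one_of_one_le₀ hM1
      linarith
  · rw [abs_of_neg hρ]
    rw [abs_of_neg hρ] at hM1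
    constructor
    · have h1 : ν ^ ρ ≤ 1 := Real.rpow_le_one_of_one_le_of_nonpos hν1 hρ.le
      linarith
    · have h2 : (2:ℝ) ^ ρ ≤ ν ^ ρ := Real.rpow_le_rpow_of_nonpos (by linarith) hν2 hρ.le
      rw [← Real.rpow_neg (by norm_num : (0:ℝ) ≤ 2), neg_neg]
      exact h2

lemma chunk_bounds {g : ℝ → ℝ} {ρ ε A₀ A₁ z₀ : ℝ}
    (hg_pos : ∀ z ∈ Set.Ici A₀, 0 < g z)
    (hA₁ : ∀ z : ℝ, A₁ ≤ z → ∀ ν : ℝ, 1/2 ≤ ν → ν ≤ 2 → |ν ^ ρ * g (z ^ ν) / g z - 1| < ε)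
    (hε : 0 < ε) (hε1 : ε < 1)
    (hz₀A₁ : A₁ ≤ z₀) (hz₀A₀ : A₀ ≤ z₀) (hz₀ : 1 < z₀)
    (n : ℕ) (w : ℝ) (hw1 : zs z₀ n ≤ w) (hw2 : w ≤ zs z₀ (n+1)) :
    (1-ε) * g (zs z₀ n) / (2:ℝ)^|ρ| ≤ g w ∧ g w ≤ (1+ε) * g (zs z₀ n) * (2:ℝ)^|ρ| := by
  have hv1 : 1 < zs z₀ n := one_lt_zs hz₀ n
  have hw0 : 0 < w := lt_trans (by linarith) (lt_of_lt_of_le hv1 hw1)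
  have hlog2 : Real.log w ≤ 2 * Real.log (zs z₀ n) := by
    have h1 : Real.log w ≤ Real.log (zs z₀ (n+1)) := Real.log_le_log hw0 hw2
    rw [log_zs (by linarith : (0:ℝ) < z₀), pow_succ] at h1
    rw [log_zs (by linarith : (0:ℝ) < z₀)]
    linarith
  obtain ⟨ν, hν1, hν2, hwv⟩ := chunk_nu hv1 hw1 hlog2
  have hzn_mem : zs z₀ n ∈ Set.Ici A₀ := Set.mem_Ici.2 (le_trans hz₀A₀ (zs_le hz₀.le n))
  have hG : 0 < g (zs z₀ n) := hg_pos _ hzn_mem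
  have hB := getB hG (hA₁ (zs z₀ n) (le_trans hz₀A₁ (zs_le hz₀.le n)) ν (by linarith) hν2) hν1
  rw [hwv] at hB
  obtain ⟨hMa, hMb⟩ := nu_rho_bounds (ρ := ρ) hν1 hν2
  have hνρ0 : 0 < ν ^ ρ := Real.rpow_pos_of_pos (by linarith) ρ
  have hM0 : (0:ℝ) < (2:ℝ)^|ρ| := Real.rpow_pos_of_pos (by norm_num) _
  have h0 : 0 ≤ (1-ε) * g (zs z₀ n) := by nlinarith
  have h0' : 0 ≤ (1+ε) * g (zs z₀ n) := by nlinarith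
  constructor
  · have : (1-ε) * g (zs z₀ n) / (2:ℝ)^|ρ| ≤ (1-ε) * g (zs z₀ n) / ν^ρ := by
      rw [div_le_div_iff₀ hM0 hνρ0]
      have := mul_le_mul_of_nonneg_left hMa h0
      linarith
    linarith [hB.1]
  · have : (1+ε) * g (zs z₀ n) / ν^ρ ≤ (1+ε) * g (zs z₀ n) * (2:ℝ)^|ρ| := by
      rw [div_le_iff₀ hνρ0]
      have h1 : (1:ℝ) ≤ (2:ℝ)^|ρ| * ν^ρ := by
        have := mul_le_mul_of_nonneg_left hMb hM0.le
        rwa [mul_inv_cancel₀ (ne_of_gt hM0)] at this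
      nlinarith [mul_le_mul_of_nonneg_left h1 h0']
    linarith [hB.2]

section Main

variable {g : ℝ → ℝ} {ρ ε A₀ A₁ z₀ : ℝ}

lemma zs_upper (hg_pos : ∀ z ∈ Set.Ici A₀, 0 < g z)
    (hA₁ : ∀ z : ℝ, A₁ ≤ z → ∀ ν : ℝ, 1/2 ≤ ν → ν ≤ 2 → |ν ^ ρ * g (z ^ ν) / g z - 1| < ε)
    (hε : 0 < ε)
    (hz₀A₁ : A₁ ≤ z₀) (hz₀A₀ : A₀ ≤ z₀) (hz₀ : 1 < z₀) :
    ∀ n : ℕ, g (zs z₀ n) ≤ ((1+ε)/(2:ℝ)^ρ)^n * g z₀ := by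
  have h2ρ : (0:ℝ) < (2:ℝ)^ρ := Real.rpow_pos_of_pos (by norm_num) ρ
  have step : ∀ n, g (zs z₀ (n+1)) ≤ ((1+ε)/(2:ℝ)^ρ) * g (zs z₀ n) := by
    intro n
    have hG : 0 < g (zs z₀ n) := hg_pos _ (le_trans hz₀A₀ (zs_le hz₀.le n))
    have hB := getB hG (hA₁ (zs z₀ n) (le_trans hz₀A₁ (zs_le hz₀.le n)) 2 (by norm_num) le_rfl)
      one_le_two
    rw [← zs_succ z₀ (by linarith) n] at hB
    have heq : ((1+ε)/(2:ℝ)^ρ) * g (zs z₀ n) = (1+ε) * g (zs z₀ n) / (2:ℝ)^ρ := by ring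
    rw [heq]
    exact hB.2.le
  intro n
  simpa [zs_zero] using geom_upper (G := fun n => g (zs z₀ n)) (r := (1+ε)/(2:ℝ)^ρ)
    (by positivity) step n

lemma zs_lower (hg_pos : ∀ z ∈ Set.Ici A₀, 0 < g z)
    (hA₁ : ∀ z : ℝ, A₁ ≤ z → ∀ ν : ℝ, 1/2 ≤ ν → ν ≤ 2 → |ν ^ ρ * g (z ^ ν) / g z - 1| < ε)
    (hε1 : ε < 1)
    (hz₀A₁ : A₁ ≤ z₀) (hz₀A₀ : A₀ ≤ z₀) (hz₀ : 1 < z₀) :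
    ∀ n : ℕ, ((1-ε)/(2:ℝ)^ρ)^n * g z₀ ≤ g (zs z₀ n) := by
  have h2ρ : (0:ℝ) < (2:ℝ)^ρ := Real.rpow_pos_of_pos (by norm_num) ρ
  have hε1' : (0:ℝ) < 1 - ε := by linarith
  have step : ∀ n, ((1-ε)/(2:ℝ)^ρ) * g (zs z₀ n) ≤ g (zs z₀ (n+1)) := by
    intro n
    have hG : 0 < g (zs z₀ n) := hg_pos _ (le_trans hz₀A₀ (zs_le hz₀.le n))
    have hB := getB hG (hA₁ (zs z₀ n) (le_trans hz₀A₁ (zs_le hz₀.le n)) 2 (by norm_num) le_rfl)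
      one_le_two
    rw [← zs_succ z₀ (by linarith) n] at hB
    have heq : ((1-ε)/(2:ℝ)^ρ) * g (zs z₀ n) = (1-ε) * g (zs z₀ n) / (2:ℝ)^ρ := by ring
    rw [heq]
    exact hB.1.le
  intro n
  simpa [zs_zero] using geom_lower (G := fun n => g (zs z₀ n)) (r := (1-ε)/(2:ℝ)^ρ)
    (div_pos hε1' h2ρ) step n

end Main

lemma not_integrable_part {g : ℝ → ℝ} {ρ A₀ : ℝ}
    (hg_pos : ∀ z ∈ Set.Ici A₀, 0 < g z)
    (hg : LogRegVarying g ρ) (hρ : ρ < 1) (A : ℝ) (hA : 0 < A)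
    (hInt : MeasureTheory.IntegrableOn (fun z => (1 / z) * g z) (Set.Ici A)) : False := by
  set f : ℝ → ℝ := fun z => (1 / z) * g z with hf
  have h2ρ1 : (2:ℝ)^(ρ-1) < 1 := Real.rpow_lt_one_of_one_lt_of_neg one_lt_two (by linarith)
  have h2ρp : (0:ℝ) < (2:ℝ)^(ρ-1) := Real.rpow_pos_of_pos (by norm_num) _
  set ε := (1 - (2:ℝ)^(ρ-1))/2 with hεdef
  clear_value ε
  have hε : 0 < ε := by rw [hεdef]; linarith
  have hε1 : ε < 1 := by rw [hεdef]; linarith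
  obtain ⟨A₁, hA₁pos, hA₁⟩ := hg ε hε 2 one_le_two
  set z₀ := max (max A₁ A) (max A₀ (Real.exp 1)) with hz₀def
  clear_value z₀
  have hz₀A₁ : A₁ ≤ z₀ := by rw [hz₀def]; exact le_trans (le_max_left _ _) (le_max_left _ _)
  have hz₀A : A ≤ z₀ := by rw [hz₀def]; exact le_trans (le_max_right _ _) (le_max_left _ _)
  have hz₀A₀ : A₀ ≤ z₀ := by rw [hz₀def]; exact le_trans (le_max_left _ _) (le_max_right _ _)
  have hz₀e : Real.exp 1 ≤ z₀ := by
    rw [hz₀def]; exact le_trans (le_max_right _ _) (le_max_right _ _)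
  have he1 : (1:ℝ) < Real.exp 1 := by have := Real.add_one_le_exp (1:ℝ); linarith
  have hz₀1 : 1 < z₀ := lt_of_lt_of_le he1 hz₀e
  have hz₀pos : (0:ℝ) < z₀ := by linarith
  have hlogz₀ : 1 ≤ Real.log z₀ := (Real.le_log_iff_exp_le hz₀pos).2 hz₀e
  have hlogz₀pos : 0 < Real.log z₀ := by linarith
  have hgz₀ : 0 < g z₀ := hg_pos _ hz₀A₀
  set M := (2:ℝ)^|ρ| with hM
  clear_value M
  have hM0 : (0:ℝ) < M := hM ▸ Real.rpow_pos_of_pos (by norm_num) _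
  set c := (1-ε) * g z₀ * Real.log z₀ / M with hc
  clear_value c
  have hc0 : 0 < c := hc ▸ div_pos (mul_pos (mul_pos (by linarith) hgz₀) hlogz₀pos) hM0
  have h2ρpos : (0:ℝ) < (2:ℝ)^ρ := Real.rpow_pos_of_pos (by norm_num) ρ
  -- interval integrability on chunks
  have hfInt : ∀ n : ℕ, IntervalIntegrable f volume (zs z₀ n) (zs z₀ (n+1)) := by
    intro n
    have hle := (zs_lt_succ hz₀1 n).le
    refine MeasureTheory.IntegrableOn.intervalIntegrable (hInt.mono_set ?_)
    rw [Set.uIcc_of_le hle]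
    intro w hw
    exact le_trans (le_trans hz₀A (zs_le hz₀1.le n)) hw.1
  -- chunk lower bound
  have hchunk : ∀ n : ℕ, c ≤ ∫ w in zs z₀ n..zs z₀ (n+1), f w := by
    intro n
    have hle := (zs_lt_succ hz₀1 n).le
    have hzn_pos : 0 < zs z₀ n := zs_pos hz₀pos n
    have hzn1_pos : 0 < zs z₀ (n+1) := zs_pos hz₀pos (n+1)
    set m := (1-ε) * g (zs z₀ n) / M with hm
    clear_value m
    have hgzn : 0 < g (zs z₀ n) := hg_pos _ (le_trans hz₀A₀ (zs_le hz₀1.le n))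
    have hm0 : 0 ≤ m := by
      rw [hm]
      apply div_nonneg _ hM0.le
      nlinarith
    have hLInt : IntervalIntegrable (fun w => m * (1/w)) volume (zs z₀ n) (zs z₀ (n+1)) := by
      apply ContinuousOn.intervalIntegrable
      apply ContinuousOn.mul continuousOn_const
      apply ContinuousOn.div continuousOn_const continuousOn_id
      intro w hw
      rw [Set.uIcc_of_le hle] at hw
      exact ne_of_gt (lt_of_lt_of_le hzn_pos hw.1)
    have hptwise : ∀ w ∈ Set.Icc (zs z₀ n) (zs z₀ (n+1)), m * (1/w) ≤ f w := by
      intro w hw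
      have hw0 : 0 < w := lt_of_lt_of_le hzn_pos hw.1
      have hcb0 := (chunk_bounds hg_pos hA₁ hε hε1 hz₀A₁ hz₀A₀ hz₀1 n w hw.1 hw.2).1
      have hcb : m ≤ g w := by rw [hm, hM]; exact hcb0
      have h1w : (0:ℝ) ≤ 1/w := by positivity
      calc m * (1/w) = (1/w) * m := by ring
      _ ≤ (1/w) * g w := mul_le_mul_of_nonneg_left hcb h1w
    have hmono := intervalIntegral.integral_mono_on hle hLInt (hfInt n) hptwise
    have hcomp : ∫ w in zs z₀ n..zs z₀ (n+1), m * (1/w) = m * (2^n * Real.log z₀) := by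
      rw [intervalIntegral.integral_const_mul, integral_one_div_of_pos hzn_pos hzn1_pos,
        Real.log_div (ne_of_gt hzn1_pos) (ne_of_gt hzn_pos),
        log_zs hz₀pos, log_zs hz₀pos, pow_succ]
      ring
    have hlow := zs_lower hg_pos hA₁ hε1 hz₀A₁ hz₀A₀ hz₀1 n
    have hq : (1:ℝ) ≤ (1-ε)*2/(2:ℝ)^ρ := by
      rw [le_div_iff₀ h2ρpos, one_mul]
      have h2ρeq : (2:ℝ)^ρ = 2 * (2:ℝ)^(ρ-1) := by
        rw [Real.rpow_sub (by norm_num : (0:ℝ) < 2), Real.rpow_one]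
        ring
      rw [h2ρeq, hεdef]
      linarith
    have hqn : (1:ℝ) ≤ ((1-ε)*2/(2:ℝ)^ρ)^n := one_le_pow₀ hq
    have hmge : (1-ε) * (((1-ε)/(2:ℝ)^ρ)^n * g z₀) / M ≤ m := by
      rw [hm]
      gcongr
    calc c = c * 1 := by ring
    _ ≤ c * ((1-ε)*2/(2:ℝ)^ρ)^n := mul_le_mul_of_nonneg_left hqn hc0.le
    _ = ((1-ε) * (((1-ε)/(2:ℝ)^ρ)^n * g z₀) / M) * (2^n * Real.log z₀) := by
        have hpow : ((1-ε)*2/(2:ℝ)^ρ)^n = ((1-ε)/(2:ℝ)^ρ)^n * 2^n := by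
          rw [← mul_pow]
          congr 1
          ring
        rw [hc, hpow]
        field_simp
    _ ≤ m * (2^n * Real.log z₀) := by
        apply mul_le_mul_of_nonneg_right hmge
        positivity
    _ = ∫ w in zs z₀ n..zs z₀ (n+1), m * (1/w) := hcomp.symm
    _ ≤ _ := hmono
  -- the total integral dominates every N * c
  have hIint : IntegrableOn f (Set.Ici z₀) := hInt.mono_set (Set.Ici_subset_Ici.2 hz₀A)
  set I := ∫ w in Set.Ici z₀, f w with hI
  have hfnonneg : 0 ≤ᵐ[volume.restrict (Set.Ici z₀)] f := by
    have h : ∀ᵐ w ∂(volume.restrict (Set.Ici z₀)), 0 ≤ f w := by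
      rw [MeasureTheory.ae_restrict_iff' measurableSet_Ici]
      apply Filter.Eventually.of_forall
      intro w hw
      have hw0 : 0 < w := lt_of_lt_of_le hz₀pos hw
      exact mul_nonneg (by positivity) (hg_pos w (le_trans hz₀A₀ hw)).le
    filter_upwards [h] with w hw
    simpa using hw
  have hIN : ∀ N : ℕ, (N : ℝ) * c ≤ I := by
    intro N
    have hsum := intervalIntegral.sum_integral_adjacent_intervals
      (a := fun n => zs z₀ n) (μ := volume) (f := f) (n := N) (fun k _ => hfInt k)
    have h1 : (N:ℝ)*c ≤ ∑ k ∈ Finset.range N, ∫ w in zs z₀ k..zs z₀ (k+1), f w := by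
      calc (N:ℝ)*c = ∑ _k ∈ Finset.range N, c := by
            rw [Finset.sum_const, Finset.card_range, nsmul_eq_mul]
      _ ≤ _ := Finset.sum_le_sum (fun k _ => hchunk k)
    rw [hsum] at h1
    have hle0N : zs z₀ 0 ≤ zs z₀ N := by
      rw [zs_zero]
      exact zs_le hz₀1.le N
    rw [intervalIntegral.integral_of_le hle0N] at h1
    have hsub : Set.Ioc (zs z₀ 0) (zs z₀ N) ⊆ Set.Ici z₀ := by
      rw [zs_zero]
      intro w hw
      exact hw.1.le
    have h2 : ∫ w in Set.Ioc (zs z₀ 0) (zs z₀ N), f w ≤ I :=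
      MeasureTheory.setIntegral_mono_set hIint hfnonneg (HasSubset.Subset.eventuallyLE hsub)
    linarith
  obtain ⟨N, hN⟩ := exists_nat_gt (I / c)
  have hlt : I < N * c := by
    rw [div_lt_iff₀ hc0] at hN
    linarith
  linarith [hIN N]

lemma integrable_part {g : ℝ → ℝ} {ρ A₀ : ℝ}
    (hg_cont : ContinuousOn g (Set.Ici A₀))
    (hg_pos : ∀ z ∈ Set.Ici A₀, 0 < g z)
    (hg : LogRegVarying g ρ) (hρ : 1 < ρ) :
    ∃ A : ℝ, 0 < A ∧
      MeasureTheory.IntegrableOn (fun z => (1 / z) * g z) (Set.Ici A) := by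
  set p := (ρ+1)/2 with hpdef
  have hp1 : 1 < p := by rw [hpdef]; linarith
  have hp0 : 0 < p := by linarith
  have h2half : (1:ℝ) < (2:ℝ)^((ρ-1)/2) :=
    (Real.one_lt_rpow_iff_of_pos (by norm_num)).2 (Or.inl ⟨one_lt_two, by linarith⟩)
  set ε := min (1/2) ((2:ℝ)^((ρ-1)/2) - 1) with hεdef
  clear_value ε
  have hε : 0 < ε := by
    rw [hεdef]
    apply lt_min (by norm_num)
    linarith
  have hε1 : ε < 1 := by
    rw [hεdef]
    calc min (1/2) ((2:ℝ)^((ρ-1)/2) - 1) ≤ 1/2 := min_le_left _ _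
    _ < 1 := by norm_num
  have hεle : 1 + ε ≤ (2:ℝ)^((ρ-1)/2) := by
    rw [hεdef]
    have := min_le_right (1/2 : ℝ) ((2:ℝ)^((ρ-1)/2) - 1)
    linarith
  obtain ⟨A₁, hA₁pos, hA₁⟩ := hg ε hε 2 one_le_two
  set z₀ := max A₁ (max A₀ (Real.exp 1)) with hz₀def
  clear_value z₀
  have hz₀A₁ : A₁ ≤ z₀ := by rw [hz₀def]; exact le_max_left _ _
  have hz₀A₀ : A₀ ≤ z₀ := by rw [hz₀def]; exact le_trans (le_max_left _ _) (le_max_right _ _)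
  have hz₀e : Real.exp 1 ≤ z₀ := by
    rw [hz₀def]; exact le_trans (le_max_right _ _) (le_max_right _ _)
  have he1 : (1:ℝ) < Real.exp 1 := by have := Real.add_one_le_exp (1:ℝ); linarith
  have hz₀1 : 1 < z₀ := lt_of_lt_of_le he1 hz₀e
  have hz₀pos : (0:ℝ) < z₀ := by linarith
  have hlogz₀ : 1 ≤ Real.log z₀ := (Real.le_log_iff_exp_le hz₀pos).2 hz₀e
  have hlogz₀pos : 0 < Real.log z₀ := by linarith
  have hgz₀ : 0 < g z₀ := hg_pos _ hz₀A₀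
  have h2ρpos : (0:ℝ) < (2:ℝ)^ρ := Real.rpow_pos_of_pos (by norm_num) ρ
  have h2abs : (0:ℝ) < (2:ℝ)^|ρ| := Real.rpow_pos_of_pos (by norm_num) _
  -- the ratio bound
  have hrle : (1+ε)/(2:ℝ)^ρ ≤ (2:ℝ)^(-p) := by
    rw [div_le_iff₀ h2ρpos, ← Real.rpow_add (by norm_num : (0:ℝ) < 2)]
    have : -p + ρ = (ρ-1)/2 := by rw [hpdef]; ring
    rw [this]
    exact hεle
  have hr0 : 0 ≤ (1+ε)/(2:ℝ)^ρ := by positivity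
  set K := (1+ε) * (2:ℝ)^|ρ| * g z₀ with hK
  have hK0 : 0 < K := by rw [hK]; positivity
  set C := K * ((2:ℝ)^p * Real.log z₀ ^ p) with hC
  have hC0 : 0 < C := by rw [hC]; positivity
  clear_value K C
  -- Potter-type bound
  have hPotter : ∀ w : ℝ, z₀ ≤ w → g w * Real.log w ^ p ≤ C := by
    intro w hw
    have hw0 : 0 < w := lt_of_lt_of_le hz₀pos hw
    have hex : ∃ k : ℕ, w < zs z₀ (k+1) := by
      obtain ⟨m, hm⟩ := exists_nat_gt w
      refine ⟨m, ?_⟩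
      have h2m : (m:ℝ) + 1 ≤ (2:ℝ)^(m+1) := by
        have h := (Nat.lt_two_pow_self (n := m+1)).le
        exact_mod_cast h
      have hzs : zs z₀ (m+1) = Real.exp (Real.log z₀ * (2:ℝ)^(m+1)) := by
        rw [zs, Real.rpow_def_of_pos hz₀pos]
      have hpowpos : (0:ℝ) < (2:ℝ)^(m+1) := by positivity
      have harg : (m:ℝ)+1 ≤ Real.log z₀ * (2:ℝ)^(m+1) := by nlinarith
      have hexp := Real.add_one_le_exp (Real.log z₀ * (2:ℝ)^(m+1))
      rw [hzs]
      linarith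
    have hup : w ≤ zs z₀ (Nat.find hex + 1) := (Nat.find_spec hex).le
    set n := Nat.find hex with hn
    have hlo : zs z₀ n ≤ w := by
      rcases Nat.eq_zero_or_pos n with h0 | hpos
      · rw [h0, zs_zero]; exact hw
      · have hk := Nat.find_min hex (show n - 1 < Nat.find hex by
          rw [← hn]; exact Nat.sub_lt hpos one_pos)
        push_neg at hk
        have heq : n - 1 + 1 = n := Nat.succ_pred_eq_of_pos hpos
        rwa [heq] at hk
    have hcb := (chunk_bounds hg_pos hA₁ hε hε1 hz₀A₁ hz₀A₀ hz₀1 n w hlo hup).2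
    have hupz := zs_upper hg_pos hA₁ hε hz₀A₁ hz₀A₀ hz₀1 n
    have hrn : ((1+ε)/(2:ℝ)^ρ)^n ≤ (2:ℝ)^(-(p*(n:ℝ))) := by
      calc ((1+ε)/(2:ℝ)^ρ)^n ≤ ((2:ℝ)^(-p))^n := pow_le_pow_left₀ hr0 hrle n
      _ = (2:ℝ)^(-(p*(n:ℝ))) := by
          rw [← Real.rpow_natCast ((2:ℝ)^(-p)) n, ← Real.rpow_mul (by norm_num : (0:ℝ) ≤ 2)]
          congr 1
          ring
    have hgw : g w ≤ K * (2:ℝ)^(-(p*(n:ℝ))) := by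
      calc g w ≤ (1+ε) * g (zs z₀ n) * (2:ℝ)^|ρ| := hcb
      _ ≤ (1+ε) * (((1+ε)/(2:ℝ)^ρ)^n * g z₀) * (2:ℝ)^|ρ| := by nlinarith
      _ = K * ((1+ε)/(2:ℝ)^ρ)^n := by rw [hK]; ring
      _ ≤ K * (2:ℝ)^(-(p*(n:ℝ))) := mul_le_mul_of_nonneg_left hrn hK0.le
    -- log bound
    have hlogw1 : 1 ≤ Real.log w := le_trans hlogz₀ (Real.log_le_log hz₀pos hw)
    have hlogw0 : (0:ℝ) ≤ Real.log w := by linarith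
    have hlw : Real.log w ≤ (2:ℝ)^(n+1) * Real.log z₀ := by
      have h := Real.log_le_log hw0 hup
      rwa [log_zs hz₀pos] at h
    have hlwp : Real.log w ^ p ≤ (2:ℝ)^(p*(n:ℝ)) * ((2:ℝ)^p * Real.log z₀ ^ p) := by
      have h1 : Real.log w ^ p ≤ ((2:ℝ)^(n+1) * Real.log z₀) ^ p :=
        Real.rpow_le_rpow hlogw0 hlw hp0.le
      rw [Real.mul_rpow (by positivity) (by positivity)] at h1
      have h2 : ((2:ℝ)^(n+1 : ℕ)) ^ p = (2:ℝ)^(p*(n:ℝ)) * (2:ℝ)^p := by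
        rw [← Real.rpow_natCast (2:ℝ) (n+1), ← Real.rpow_mul (by norm_num : (0:ℝ) ≤ 2),
          ← Real.rpow_add (by norm_num : (0:ℝ) < 2)]
        congr 1
        push_cast
        ring
      rw [h2] at h1
      linarith
    have hmul := mul_le_mul hgw hlwp (Real.rpow_nonneg hlogw0 p) (by positivity)
    have hone : (2:ℝ)^(-(p*(n:ℝ))) * (2:ℝ)^(p*(n:ℝ)) = 1 := by
      rw [← Real.rpow_add (by norm_num : (0:ℝ) < 2)]
      simp
    calc g w * Real.log w ^ p
        ≤ K * (2:ℝ)^(-(p*(n:ℝ))) * ((2:ℝ)^(p*(n:ℝ)) * ((2:ℝ)^p * Real.log z₀ ^ p)) := hmul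
    _ = ((2:ℝ)^(-(p*(n:ℝ))) * (2:ℝ)^(p*(n:ℝ))) * (K * ((2:ℝ)^p * Real.log z₀ ^ p)) := by ring
    _ = C := by rw [hone, hC, one_mul]
  -- FTC: integrability of the dominating function
  have hderiv : ∀ x ∈ Set.Ici z₀,
      HasDerivAt (fun w => (C/(1-p)) * Real.log w ^ (1-p)) (C * (Real.log x ^ (-p) / x)) x := by
    intro x hx
    have hx0 : (0:ℝ) < x := lt_of_lt_of_le hz₀pos hx
    have hlx : 0 < Real.log x :=
      lt_of_lt_of_le hlogz₀pos (Real.log_le_log hz₀pos hx)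
    have h1 : HasDerivAt Real.log x⁻¹ x := Real.hasDerivAt_log (ne_of_gt hx0)
    have h2 : HasDerivAt (fun y : ℝ => y ^ (1-p)) ((1-p) * Real.log x ^ (1-p-1)) (Real.log x) :=
      Real.hasDerivAt_rpow_const (Or.inl (ne_of_gt hlx))
    have h3 := h2.comp x h1
    have h4 := h3.const_mul (C/(1-p))
    refine h4.congr_deriv ?_
    rw [show (1:ℝ)-p-1 = -p by ring]
    have hp' : (1:ℝ)-p ≠ 0 := by linarith
    field_simp
  have hDnonneg : ∀ x ∈ Set.Ioi z₀, 0 ≤ C * (Real.log x ^ (-p) / x) := by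
    intro x hx
    have hx0 : (0:ℝ) < x := lt_trans hz₀pos hx
    have hlx : 0 ≤ Real.log x := Real.log_nonneg (by linarith [lt_of_lt_of_le hz₀1 hx.le])
    positivity
  have htend : Filter.Tendsto (fun w => (C/(1-p)) * Real.log w ^ (1-p)) Filter.atTop (nhds 0) := by
    have h1 : Filter.Tendsto (fun y : ℝ => y ^ (-(p-1))) Filter.atTop (nhds 0) :=
      tendsto_rpow_neg_atTop (by linarith)
    have h2 := h1.comp Real.tendsto_log_atTop
    have h3 : (fun w : ℝ => Real.log w ^ (1-p)) = (fun y : ℝ => y ^ (-(p-1))) ∘ Real.log := by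
      funext w
      simp only [Function.comp_apply]
      rw [show (1:ℝ)-p = -(p-1) by ring]
    have h4 : Filter.Tendsto (fun w : ℝ => Real.log w ^ (1-p)) Filter.atTop (nhds 0) := by
      rw [h3]; exact h2
    have := h4.const_mul (C/(1-p))
    simpa [mul_comm] using this
  have hD : IntegrableOn (fun x => C * (Real.log x ^ (-p) / x)) (Set.Ioi z₀) volume :=
    integrableOn_Ioi_deriv_of_nonneg' hderiv hDnonneg htend
  refine ⟨z₀, hz₀pos, ?_⟩
  rw [integrableOn_Ici_iff_integrableOn_Ioi]
  apply MeasureTheory.Integrable.mono hD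
  · have hcontf : ContinuousOn (fun z : ℝ => (1/z) * g z) (Set.Ioi z₀) := by
      apply ContinuousOn.mul
      · apply ContinuousOn.div continuousOn_const continuousOn_id
        intro w hw
        exact ne_of_gt (lt_trans hz₀pos hw)
      · exact hg_cont.mono (fun w hw => le_trans hz₀A₀ (le_of_lt hw))
    exact hcontf.aestronglyMeasurable measurableSet_Ioi
  · rw [MeasureTheory.ae_restrict_iff' measurableSet_Ioi]
    apply Filter.Eventually.of_forall
    intro w hw
    have hw0 : 0 < w := lt_trans hz₀pos hw
    have hgw : 0 < g w := hg_pos w (le_trans hz₀A₀ hw.le)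
    have hlw1 : 1 ≤ Real.log w := le_trans hlogz₀ (Real.log_le_log hz₀pos hw.le)
    have hlwpos : 0 < Real.log w := by linarith
    have hlwppos : 0 < Real.log w ^ p := Real.rpow_pos_of_pos hlwpos p
    have hP := hPotter w hw.le
    have hgle : g w ≤ C * Real.log w ^ (-p) := by
      rw [Real.rpow_neg hlwpos.le, ← div_eq_mul_inv, le_div_iff₀ hlwppos]
      exact hP
    have hfle : (1/w) * g w ≤ C * (Real.log w ^ (-p) / w) := by
      have h1w : (0:ℝ) ≤ 1/w := by positivity
      calc (1/w) * g w ≤ (1/w) * (C * Real.log w ^ (-p)) := mul_le_mul_of_nonneg_left hgle h1w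
      _ = C * (Real.log w ^ (-p) / w) := by ring
    rw [Real.norm_eq_abs, Real.norm_eq_abs, abs_of_nonneg (by positivity : (0:ℝ) ≤ (1/w) * g w)]
    exact le_trans hfle (le_abs_self _)

/-- Proposition 3 (Integrability, cases ρ ≠ 1): if `g ∈ L_ρ(∞)` with `ρ > 1`
then `(1/z) g(z)` is integrable on some `[A,∞)`; if `ρ < 1` it is integrable
on no `[A,∞)`. -/
theorem statement2 (ρ : ℝ) (g : ℝ → ℝ) (A₀ : ℝ)
    (hg_cont : ContinuousOn g (Set.Ici A₀)) (hg_pos : ∀ z ∈ Set.Ici A₀, 0 < g z)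
    (hg : LogRegVarying g ρ) :
    (1 < ρ → ∃ A : ℝ, 0 < A ∧
      MeasureTheory.IntegrableOn (fun z => (1 / z) * g z) (Set.Ici A)) ∧
    (ρ < 1 → ∀ A : ℝ, 0 < A →
      ¬ MeasureTheory.IntegrableOn (fun z => (1 / z) * g z) (Set.Ici A)) := by
  constructor
  · intro hρ
    exact integrable_part hg_cont hg_pos hg hρ
  · intro hρ A hA hInt
    exact not_integrable_part hg_pos hg hρ A hA hInt
end

section
/- (Proposition 3, Integrability, case ρ = 1.) Let g be log-regularly varying at ∞ with index ρ = 1, and write g(z) = (log z)^{−1} s(z) for z large, with s log-slowly varying at ∞. If there exists β > 1 such that s(z) < (log(log z))^{−β} for all sufficiently large z, then there exists A > 0 such that z ↦ (1/z)g(z) is integrable on [A,∞). If there exists β < 1 such that s(z) > (log(log z))^{−β} for all sufficiently large z, then for every A > 0 the function z ↦ (1/z)g(z) is not integrable on [A,∞). -/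
open Real Set MeasureTheory
open Filter Topology

lemma large_facts {z : ℝ} (hz : Real.exp (Real.exp 1) ≤ z) :
    0 < z ∧ 1 ≤ Real.log z ∧ 1 ≤ Real.log (Real.log z) := by
  have h0 : (0:ℝ) < Real.exp (Real.exp 1) := Real.exp_pos _
  have hz0 : 0 < z := lt_of_lt_of_le h0 hz
  have h1 : Real.exp 1 ≤ Real.log z := by
    rw [Real.le_log_iff_exp_le hz0]; exact hz
  have h1' : 1 ≤ Real.log z := le_trans (by linarith [Real.add_one_le_exp (1:ℝ)]) h1
  have h2 : 1 ≤ Real.log (Real.log z) := by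
    rw [Real.le_log_iff_exp_le (by linarith)]; simpa using h1
  exact ⟨hz0, h1', h2⟩

lemma loglog_deriv {z : ℝ} (hz : Real.exp (Real.exp 1) ≤ z) :
    HasDerivAt (fun z => Real.log (Real.log z)) ((Real.log z)⁻¹ * z⁻¹) z := by
  obtain ⟨hz0, h1, h2⟩ := large_facts hz
  exact (Real.hasDerivAt_log (by linarith)).comp z (Real.hasDerivAt_log (by linarith))

lemma F_deriv {β z : ℝ} (hβ : β ≠ 1) (hz : Real.exp (Real.exp 1) ≤ z) :
    HasDerivAt (fun z => -(β-1)⁻¹ * (Real.log (Real.log z)) ^ (1-β))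
      (z⁻¹ * (Real.log z)⁻¹ * (Real.log (Real.log z)) ^ (-β)) z := by
  obtain ⟨hz0, h1, h2⟩ := large_facts hz
  have h3 : HasDerivAt (fun z => (Real.log (Real.log z)) ^ (1-β))
      (((1-β) * (Real.log (Real.log z)) ^ (1-β-1)) * ((Real.log z)⁻¹ * z⁻¹)) z :=
    (Real.hasDerivAt_rpow_const (Or.inl (by linarith))).comp z (loglog_deriv hz)
  have := h3.const_mul (-(β-1)⁻¹)
  refine this.congr_deriv ?_
  have e1 : 1 - β - 1 = -β := by ring
  rw [e1]
  have hne : β - 1 ≠ 0 := sub_ne_zero.mpr hβ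
  field_simp
  ring

lemma G_deriv {z : ℝ} (hz : Real.exp (Real.exp 1) ≤ z) :
    HasDerivAt (fun z => Real.log (Real.log (Real.log z)))
      (z⁻¹ * (Real.log z)⁻¹ * (Real.log (Real.log z))⁻¹) z := by
  obtain ⟨hz0, h1, h2⟩ := large_facts hz
  have := (Real.hasDerivAt_log (by linarith : Real.log (Real.log z) ≠ 0)).comp z (loglog_deriv hz)
  refine this.congr_deriv ?_
  ring

/-- Proposition 3 (Integrability, case ρ = 1): write `g(z) = (log z)⁻¹ s(z)`
for large `z` with `s ∈ L₀(∞)`.  If `s(z) < (log log z)^{−β}` for some `β > 1`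
and all large `z`, then `(1/z) g(z)` is integrable on some `[A,∞)`; if
`s(z) > (log log z)^{−β}` for some `β < 1` and all large `z`, then it is
integrable on no `[A,∞)`. -/
theorem statement3 (g s : ℝ → ℝ) (A₀ : ℝ)
    (hg_cont : ContinuousOn g (Set.Ici A₀)) (hg_pos : ∀ z ∈ Set.Ici A₀, 0 < g z)
    (hg : LogRegVarying g 1) (hs : LogRegVarying s 0)
    (A₁ : ℝ) (hrepr : ∀ z : ℝ, A₁ ≤ z → g z = (Real.log z)⁻¹ * s z) :
    ((∃ β : ℝ, 1 < β ∧ ∃ Z : ℝ, ∀ z : ℝ, Z ≤ z → s z < (Real.log (Real.log z)) ^ (-β)) →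
      ∃ A : ℝ, 0 < A ∧
        MeasureTheory.IntegrableOn (fun z => (1 / z) * g z) (Set.Ici A)) ∧
    ((∃ β : ℝ, β < 1 ∧ ∃ Z : ℝ, ∀ z : ℝ, Z ≤ z → (Real.log (Real.log z)) ^ (-β) < s z) →
      ∀ A : ℝ, 0 < A →
        ¬ MeasureTheory.IntegrableOn (fun z => (1 / z) * g z) (Set.Ici A)) := by
  constructor
  · rintro ⟨β, hβ, Z, hZ⟩
    set B := max (max A₀ A₁) (max Z (Real.exp (Real.exp 1))) with hB
    have hBe : Real.exp (Real.exp 1) ≤ B := le_max_of_le_right (le_max_right _ _)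
    have hB0 : 0 < B := lt_of_lt_of_le (Real.exp_pos _) hBe
    refine ⟨B, hB0, ?_⟩
    rw [integrableOn_Ici_iff_integrableOn_Ioi]
    have hF'int : IntegrableOn
        (fun z => z⁻¹ * (Real.log z)⁻¹ * (Real.log (Real.log z)) ^ (-β)) (Ioi B) := by
      apply integrableOn_Ioi_deriv_of_nonneg
        (g := fun z => -(β-1)⁻¹ * (Real.log (Real.log z)) ^ (1-β)) (l := 0)
      · exact (F_deriv (ne_of_gt hβ) hBe).continuousAt.continuousWithinAt
      · exact fun x hx => F_deriv (ne_of_gt hβ) (le_trans hBe (le_of_lt hx))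
      · intro x hx
        obtain ⟨hx0, h1, h2⟩ := large_facts (le_trans hBe (le_of_lt hx))
        positivity
      · have h1 : Tendsto (fun z : ℝ => (Real.log (Real.log z)) ^ (1-β)) atTop (𝓝 0) := by
          have h0 := (tendsto_rpow_neg_atTop (by linarith : (0:ℝ) < β - 1)).comp
            (Real.tendsto_log_atTop.comp Real.tendsto_log_atTop)
          simp only [Function.comp_def] at h0
          have e : (1:ℝ) - β = -(β - 1) := by ring
          rw [e]
          exact h0
        have := h1.const_mul (-(β-1)⁻¹)
        simpa using this
    apply Integrable.mono' hF'int
    · have hcont : ContinuousOn (fun z => (1 / z) * g z) (Ioi B) := by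
        apply ContinuousOn.mul
        · exact continuousOn_const.div continuousOn_id
            (fun z hz => ne_of_gt (lt_trans hB0 hz))
        · exact hg_cont.mono (fun z hz => mem_Ici.mpr (le_trans (le_max_of_le_left (le_max_left _ _))
            (le_of_lt (mem_Ioi.mp hz))))
      exact hcont.aestronglyMeasurable measurableSet_Ioi
    · rw [ae_restrict_iff' measurableSet_Ioi]
      filter_upwards with z hz
      have hzB : B ≤ z := le_of_lt hz
      obtain ⟨hz0, h1, h2⟩ := large_facts (le_trans hBe hzB)
      have hgz : 0 < g z := hg_pos z (le_trans (le_max_of_le_left (le_max_left _ _)) hzB)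
      have hrz : g z = (Real.log z)⁻¹ * s z :=
        hrepr z (le_trans (le_max_of_le_left (le_max_right _ _)) hzB)
      have hsz : s z < (Real.log (Real.log z)) ^ (-β) :=
        hZ z (le_trans (le_max_of_le_right (le_max_left _ _)) hzB)
      rw [Real.norm_eq_abs, abs_of_nonneg (by positivity)]
      rw [hrz]
      have hc : (0:ℝ) < (1/z) * (Real.log z)⁻¹ := by positivity
      calc (1/z) * ((Real.log z)⁻¹ * s z)
          = ((1/z) * (Real.log z)⁻¹) * s z := by ring
        _ ≤ ((1/z) * (Real.log z)⁻¹) * (Real.log (Real.log z)) ^ (-β) :=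
            mul_le_mul_of_nonneg_left (le_of_lt hsz) (le_of_lt hc)
        _ = z⁻¹ * (Real.log z)⁻¹ * (Real.log (Real.log z)) ^ (-β) := by
            rw [one_div]
  · rintro ⟨β, hβ, Z, hZ⟩ A hA hInt
    set B := max (max A A₁) (max Z (Real.exp (Real.exp 1))) with hB
    have hBe : Real.exp (Real.exp 1) ≤ B := le_max_of_le_right (le_max_right _ _)
    have hB0 : 0 < B := lt_of_lt_of_le (Real.exp_pos _) hBe
    have hInt' : IntegrableOn (fun z => (1 / z) * g z) (Ioi B) := by
      apply hInt.mono_set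
      intro z hz
      exact mem_Ici.mpr (le_trans (le_max_of_le_left (le_max_left _ _)) (le_of_lt (mem_Ioi.mp hz)))
    have hG'int : IntegrableOn
        (fun z => z⁻¹ * (Real.log z)⁻¹ * (Real.log (Real.log z))⁻¹) (Ioi B) := by
      apply Integrable.mono' hInt'
      · have hcont : ContinuousOn
            (fun z : ℝ => z⁻¹ * (Real.log z)⁻¹ * (Real.log (Real.log z))⁻¹) (Ioi B) := by
          intro x hx
          obtain ⟨hx0, h1, h2⟩ := large_facts (le_trans hBe (le_of_lt hx))
          apply ContinuousAt.continuousWithinAt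
          have c1 : ContinuousAt (fun z : ℝ => Real.log (Real.log z)) x :=
            (Real.continuousAt_log (by linarith)).comp (Real.continuousAt_log (by linarith))
          exact ((continuousAt_id.inv₀ (by simpa using hx0.ne')).mul
            ((Real.continuousAt_log (by linarith)).inv₀ (by linarith))).mul
            (c1.inv₀ (by linarith))
        exact hcont.aestronglyMeasurable measurableSet_Ioi
      · rw [ae_restrict_iff' measurableSet_Ioi]
        filter_upwards with z hz
        have hzB : B ≤ z := le_of_lt hz
        obtain ⟨hz0, h1, h2⟩ := large_facts (le_trans hBe hzB)
        have hrz : g z = (Real.log z)⁻¹ * s z :=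
          hrepr z (le_trans (le_max_of_le_left (le_max_right _ _)) hzB)
        have hsz : (Real.log (Real.log z)) ^ (-β) < s z :=
          hZ z (le_trans (le_max_of_le_right (le_max_left _ _)) hzB)
        have hmono : (Real.log (Real.log z))⁻¹ ≤ (Real.log (Real.log z)) ^ (-β) := by
          rw [← Real.rpow_neg_one]
          exact Real.rpow_le_rpow_of_exponent_le h2 (by linarith)
        have hlb : (Real.log (Real.log z))⁻¹ ≤ s z := le_trans hmono (le_of_lt hsz)
        rw [Real.norm_eq_abs, abs_of_nonneg (by positivity)]
        rw [hrz]
        have hc : (0:ℝ) < (1/z) * (Real.log z)⁻¹ := by positivity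
        calc z⁻¹ * (Real.log z)⁻¹ * (Real.log (Real.log z))⁻¹
            = ((1/z) * (Real.log z)⁻¹) * (Real.log (Real.log z))⁻¹ := by rw [one_div]
          _ ≤ ((1/z) * (Real.log z)⁻¹) * s z :=
              mul_le_mul_of_nonneg_left hlb (le_of_lt hc)
          _ = (1/z) * ((Real.log z)⁻¹ * s z) := by ring
    have hder : ∀ x ∈ Ioi B, HasDerivAt (fun z => Real.log (Real.log (Real.log z)))
        (x⁻¹ * (Real.log x)⁻¹ * (Real.log (Real.log x))⁻¹) x :=
      fun x hx => G_deriv (le_trans hBe (le_of_lt hx))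
    have hlim := tendsto_limUnder_of_hasDerivAt_of_integrableOn_Ioi hder hG'int
    have htop : Tendsto (fun z : ℝ => Real.log (Real.log (Real.log z))) atTop atTop :=
      Real.tendsto_log_atTop.comp (Real.tendsto_log_atTop.comp Real.tendsto_log_atTop)
    exact not_tendsto_nhds_of_tendsto_atTop htop _ hlim
end

section
/- (Proposition 4, Location–scale transformation.) Let f : ℝ → ℝ with g(z) = z f(z) log-regularly varying at ∞ with index ρ. Then for any λ ≥ 0 and τ ≥ 1, as z → ∞, g((z−μ)/σ)/g(z) → 1 and (1/σ) f((z−μ)/σ)/f(z) → 1, uniformly on (μ,σ) ∈ [−λ,λ] × [1/τ, τ]; that is, for every ε > 0 there exists Z such that z ≥ Z implies |g((z−μ)/σ)/g(z) − 1| < ε and |(1/σ) f((z−μ)/σ)/f(z) − 1| < ε for all (μ,σ) ∈ [−λ,λ] × [1/τ, τ]. -/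
open Real Set

lemma aux1 {a b G e : ℝ} (hb : 1/2 ≤ b) (hab : G * b = a)
    (ha : |a - 1| < e) (hb1 : |b - 1| < e) (he : e ≤ 1/2) :
    |G - 1| < 4 * e := by
  have h1 := abs_lt.1 ha
  have h2 := abs_lt.1 hb1
  rw [abs_lt]
  constructor <;> nlinarith [h1.1, h1.2, h2.1, h2.2]

lemma aux2 {c G e ε : ℝ} (hG : |G - 1| < 4*e) (hc : |c - 1| < e)
    (he : e ≤ ε/16) (heh : e ≤ 1/2) (h0 : 0 < e) : |c*G - 1| < ε := by
  have h1 := abs_lt.1 hG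
  have h2 := abs_lt.1 hc
  rw [abs_lt]
  constructor <;> nlinarith

/-- Proposition 4 (Location–scale transformation): if `g(z) = z f(z) ∈ L_ρ(∞)`,
then `g((z−μ)/σ)/g(z) → 1` and `(1/σ) f((z−μ)/σ)/f(z) → 1` as `z → ∞`,
uniformly on `(μ,σ) ∈ [−λ,λ] × [1/τ, τ]` for any `λ ≥ 0`, `τ ≥ 1`. -/
theorem statement6 (ρ : ℝ) (f : ℝ → ℝ) (A₀ : ℝ)
    (hc : ContinuousOn (fun z => z * f z) (Set.Ici A₀))
    (hp : ∀ z ∈ Set.Ici A₀, 0 < z * f z)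
    (hg : LogRegVarying (fun z => z * f z) ρ) :
    ∀ lam : ℝ, 0 ≤ lam → ∀ τ : ℝ, 1 ≤ τ → ∀ ε : ℝ, 0 < ε →
      ∃ Z : ℝ, ∀ z : ℝ, Z ≤ z → ∀ μ σ : ℝ, |μ| ≤ lam → 1 / τ ≤ σ → σ ≤ τ →
        |((z - μ) / σ * f ((z - μ) / σ)) / (z * f z) - 1| < ε ∧
        |(1 / σ) * f ((z - μ) / σ) / f z - 1| < ε := by
  intro lam hlam τ hτ ε hε
  have hτpos : (0:ℝ) < τ := lt_of_lt_of_le one_pos hτ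
  set ε₁ : ℝ := min (ε/16) (1/2) with hε₁def
  have hε₁pos : 0 < ε₁ := lt_min (by linarith) (by norm_num)
  have hε₁le : ε₁ ≤ ε/16 := min_le_left _ _
  have hε₁half : ε₁ ≤ 1/2 := min_le_right _ _
  obtain ⟨A, hApos, hA⟩ := hg ε₁ hε₁pos 2 one_le_two
  have hcont : ContinuousAt (fun v : ℝ => v ^ ρ) 1 :=
    Real.continuousAt_rpow_const 1 ρ (Or.inl one_ne_zero)
  rw [Metric.continuousAt_iff] at hcont
  obtain ⟨δ, hδpos, hδ⟩ := hcont ε₁ hε₁pos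
  set C : ℝ := Real.log 2 + Real.log τ with hCdef
  have hC0 : 0 ≤ C := add_nonneg (Real.log_nonneg one_le_two) (Real.log_nonneg hτ)
  refine ⟨max (max A (max A₀ (2*lam + 2)))
      (max (lam + τ*(|A₀|+1)) (max (Real.exp (2*C+2)) (max (Real.exp (C/δ + 1)) (lam + lam/ε₁ + 1)))), ?_⟩
  intro z hz μ σ hμ hσ1 hσ2
  simp only [max_le_iff] at hz
  obtain ⟨⟨hzA, hzA0, hzlam⟩, hzw, hzexp1, hzexp2, hzc⟩ := hz
  have hμl := abs_le.1 hμ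
  have hzpos : (0:ℝ) < z := by linarith
  have hzμpos : 0 < z - μ := by linarith
  have hzμle : z - μ ≤ 2*z := by linarith
  have hzμge : z/2 ≤ z - μ := by linarith
  have hσpos : 0 < σ := lt_of_lt_of_le (by positivity) hσ1
  set w : ℝ := (z - μ)/σ with hwdef
  have hw1 : |A₀| + 1 ≤ w := by
    rw [hwdef, le_div_iff₀ hσpos]
    nlinarith [abs_nonneg A₀]
  have hwpos : 0 < w := lt_of_lt_of_le (by positivity) hw1
  have hwA0 : A₀ ≤ w := by nlinarith [le_abs_self A₀]
  have hlogz : 2*C + 2 ≤ Real.log z := (Real.le_log_iff_exp_le hzpos).2 hzexp1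
  have hlogz2 : C/δ + 1 ≤ Real.log z := (Real.le_log_iff_exp_le hzpos).2 hzexp2
  have hlogzpos : 0 < Real.log z := by linarith
  have hlw : Real.log w = Real.log (z-μ) - Real.log σ :=
    Real.log_div (ne_of_gt hzμpos) (ne_of_gt hσpos)
  have h1 : Real.log (z-μ) ≤ Real.log 2 + Real.log z := by
    rw [← Real.log_mul (by norm_num) (ne_of_gt hzpos)]
    exact Real.log_le_log hzμpos hzμle
  have h2 : Real.log z - Real.log 2 ≤ Real.log (z-μ) := by
    have := Real.log_le_log (by positivity : (0:ℝ) < z/2) hzμge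
    rw [Real.log_div (ne_of_gt hzpos) (by norm_num)] at this
    linarith
  have h3 : Real.log σ ≤ Real.log τ := Real.log_le_log hσpos hσ2
  have h4 : -Real.log τ ≤ Real.log σ := by
    have := Real.log_le_log (by positivity : (0:ℝ) < 1/τ) hσ1
    rw [one_div, Real.log_inv] at this
    linarith
  have hlwz : |Real.log w - Real.log z| ≤ C := by
    rw [abs_le, hlw]; constructor <;> [skip; skip] <;> simp only [hCdef] <;> linarith
  set ν : ℝ := Real.log w / Real.log z with hνdef
  have hνsub : |ν - 1| ≤ C / Real.log z := by
    have hne : ν - 1 = (Real.log w - Real.log z)/Real.log z := by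
      rw [hνdef]; field_simp
    rw [hne, abs_div, abs_of_pos hlogzpos]
    gcongr
  have hνhalf : |ν - 1| ≤ 1/2 := by
    refine le_trans hνsub ?_
    rw [div_le_iff₀ hlogzpos]; linarith
  have hν1 : 1/2 ≤ ν := by have := abs_le.1 hνhalf; linarith [this.1]
  have hν2 : ν ≤ 2 := by have := abs_le.1 hνhalf; linarith [this.2]
  have hCδ : C / Real.log z < δ := by
    rw [div_lt_iff₀ hlogzpos]
    have h5 : δ * (C/δ + 1) = C + δ := by field_simp
    have h6 := mul_le_mul_of_nonneg_left hlogz2 hδpos.le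
    linarith
  have hρclose : |ν ^ ρ - 1| < ε₁ := by
    have hd : dist ν 1 < δ := by
      rw [Real.dist_eq]; exact lt_of_le_of_lt hνsub hCδ
    have := hδ hd
    simpa [Real.dist_eq, Real.one_rpow] using this
  have hzν : z ^ ν = w := by
    rw [Real.rpow_def_of_pos hzpos]
    have : Real.log z * ν = Real.log w := by
      rw [hνdef]; field_simp
    rw [this, Real.exp_log hwpos]
  have key := hA z hzA ν hν1 hν2
  simp only [hzν] at key
  have hgz : 0 < z * f z := hp z hzA0
  have hgw : 0 < w * f w := hp w hwA0
  have hνpos : 0 < ν := by linarith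
  have hbpos : 0 < ν ^ ρ := Real.rpow_pos_of_pos hνpos ρ
  have hble : 1/2 ≤ ν ^ ρ := by
    have := abs_lt.1 hρclose; linarith [this.1]
  set G : ℝ := (w * f w) / (z * f z) with hGdef
  have hab : G * ν^ρ = ν ^ ρ * (w * f w) / (z * f z) := by
    rw [hGdef]; ring
  have hGclose : |G - 1| < 4 * ε₁ := aux1 hble hab key hρclose hε₁half
  have hfz : 0 < f z := by
    have h := div_pos hgz hzpos
    rwa [mul_div_cancel_left₀ _ (ne_of_gt hzpos)] at h
  have hfzne : f z ≠ 0 := ne_of_gt hfz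
  have hcval : |z/(z-μ) - 1| < ε₁ := by
    have hne : z/(z-μ) - 1 = μ/(z-μ) := by field_simp; ring
    rw [hne, abs_div, abs_of_pos hzμpos, div_lt_iff₀ hzμpos]
    have h7 : ε₁ * (lam/ε₁ + 1) = lam + ε₁ := by field_simp
    have h8 : lam/ε₁ + 1 ≤ z - μ := by linarith
    have h9 := mul_le_mul_of_nonneg_left h8 hε₁pos.le
    linarith
  have hT : (1/σ) * f w / f z = (z/(z-μ)) * G := by
    rw [hGdef, hwdef]
    field_simp
  constructor
  · calc |G - 1| < 4 * ε₁ := hGclose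
      _ < ε := by linarith
  · rw [hT]
    exact aux2 hGclose hcval hε₁le hε₁half hε₁pos
end

section
/- (Proposition 5, Properness of the posterior.) In the location–scale model, if the observations x₁,…,xₙ (n ≥ 2) are pairwise distinct, then the marginal m(xₙ) = ∫₀^∞ ∫_ℝ π(μ,σ) ∏_{i=1}^n (1/σ)f((xᵢ−μ)/σ) dμ dσ is finite, so the joint posterior density π(μ,σ | xₙ) is proper. -/
open Real Set MeasureTheory

lemma lint1D {s : Set ℝ} {φ φ' : ℝ → ℝ} (hs : MeasurableSet s)
    (hφ : ∀ x ∈ s, HasDerivWithinAt φ (φ' x) s x) (hinj : Set.InjOn φ s) (g : ℝ → ENNReal) :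
    ∫⁻ x in φ '' s, g x = ∫⁻ x in s, ENNReal.ofReal |φ' x| * g (φ x) := by
  simpa [ContinuousLinearMap.det_toSpanSingleton] using
    MeasureTheory.lintegral_image_eq_lintegral_abs_det_fderiv_mul volume hs
      (fun x hx => (hφ x hx).hasFDerivWithinAt) hinj g

/-- substitution μ = a - σ u -/
lemma auxA (a σ : ℝ) (hσ : 0 < σ) (g : ℝ → ENNReal) :
    ∫⁻ μ, g μ = ENNReal.ofReal σ * ∫⁻ u, g (a - σ * u) := by
  have hderiv : ∀ u ∈ (univ : Set ℝ), HasDerivWithinAt (fun u => a - σ * u) (-σ) univ u := by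
    intro u _
    have h1 : HasDerivAt (fun u : ℝ => a - σ * u) (-(σ * 1)) u :=
      ((hasDerivAt_id u).const_mul σ).const_sub a
    simpa using h1.hasDerivWithinAt (s := univ)
  have hinj : Set.InjOn (fun u => a - σ * u) univ := by
    intro u _ v _ h
    simp only at h
    have : σ * u = σ * v := by linarith
    exact mul_left_cancel₀ (ne_of_gt hσ) this
  have himg : (fun u => a - σ * u) '' univ = univ := by
    apply Set.image_univ_of_surjective
    intro μ; exact ⟨(a - μ) / σ, by field_simp; ring⟩
  have h := lint1D MeasurableSet.univ hderiv hinj g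
  rw [himg] at h
  simp only [Measure.restrict_univ] at h
  rw [h, ← lintegral_const_mul' _ _ ENNReal.ofReal_ne_top]
  congr 1 with u
  rw [abs_of_nonpos (by linarith : -σ ≤ 0), neg_neg]

/-- inversion substitution bound -/
lemma auxB (u d' : ℝ) (hd : 0 < d') (f : ℝ → ℝ) :
    ∫⁻ σ in Set.Ioc (0:ℝ) 1, ENNReal.ofReal (σ⁻¹ * σ⁻¹ * f (u + d' / σ)) ≤
      ENNReal.ofReal d'⁻¹ * ∫⁻ w, ENNReal.ofReal (f w) := by
  set φ : ℝ → ℝ := fun σ => u + d' / σ with hφdef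
  have hderiv : ∀ σ ∈ Set.Ioc (0:ℝ) 1,
      HasDerivWithinAt φ (d' * -(σ^2)⁻¹) (Set.Ioc (0:ℝ) 1) σ := by
    intro σ hσ
    have h1 : HasDerivAt (fun σ : ℝ => u + d' * σ⁻¹) (d' * -(σ^2)⁻¹) σ :=
      ((hasDerivAt_inv (ne_of_gt hσ.1)).const_mul d').const_add u
    have he : φ = fun σ : ℝ => u + d' * σ⁻¹ := by
      funext s; simp [hφdef, div_eq_mul_inv]
    rw [he]
    exact h1.hasDerivWithinAt
  have hinj : Set.InjOn φ (Set.Ioc (0:ℝ) 1) := by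
    intro s hs t ht h
    simp only [hφdef] at h
    have h2 : d' / s = d' / t := by linarith
    rw [div_eq_div_iff (ne_of_gt hs.1) (ne_of_gt ht.1)] at h2
    exact (mul_left_cancel₀ (ne_of_gt hd) h2).symm
  have himg := lint1D measurableSet_Ioc hderiv hinj (fun w => ENNReal.ofReal (d'⁻¹ * f w))
  calc ∫⁻ σ in Set.Ioc (0:ℝ) 1, ENNReal.ofReal (σ⁻¹ * σ⁻¹ * f (u + d' / σ))
      = ∫⁻ σ in Set.Ioc (0:ℝ) 1,
          ENNReal.ofReal |d' * -(σ^2)⁻¹| * ENNReal.ofReal (d'⁻¹ * f (φ σ)) := by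
        apply setLIntegral_congr_fun measurableSet_Ioc
        intro σ hσ
        dsimp only
        rw [← ENNReal.ofReal_mul (abs_nonneg _)]
        congr 1
        have hσ0 : σ ≠ 0 := ne_of_gt hσ.1
        have habs : |d' * -(σ^2)⁻¹| = d' * (σ^2)⁻¹ := by
          rw [abs_mul, abs_of_pos hd, abs_neg, abs_of_nonneg (by positivity)]
        rw [habs]
        show σ⁻¹ * σ⁻¹ * f (u + d'/σ) = d' * (σ^2)⁻¹ * (d'⁻¹ * f (u + d'/σ))
        field_simp
    _ = ∫⁻ w in φ '' Set.Ioc (0:ℝ) 1, ENNReal.ofReal (d'⁻¹ * f w) := himg.symm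
    _ ≤ ∫⁻ w, ENNReal.ofReal (d'⁻¹ * f w) := setLIntegral_le_lintegral _ _
    _ = ENNReal.ofReal d'⁻¹ * ∫⁻ w, ENNReal.ofReal (f w) := by
        rw [← lintegral_const_mul' _ _ ENNReal.ofReal_ne_top]
        congr 1 with w
        rw [ENNReal.ofReal_mul (by positivity)]

lemma pairlem (f : ℝ → ℝ) (hfm : Measurable f) (hf0 : ∀ z, 0 ≤ f z)
    (hlint1 : ∫⁻ z, ENNReal.ofReal (f z) = 1)
    (C K dd B : ℝ) (hC : ∀ z, f z ≤ C) (hC0 : 0 ≤ C) (hK0 : 0 ≤ K) (hdd : 0 < dd) (hB0 : 0 ≤ B)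
    (k : ℕ) (a b : ℝ) (hab : a < b) :
    ∫⁻ σ in Set.Ioi (0:ℝ), ∫⁻ μ, ENNReal.ofReal (B * (σ⁻¹)^(k+3) *
      (min C (2*K/dd*σ))^k * (f ((a-μ)/σ) * f ((b-μ)/σ))) < ⊤ := by
  have hd' : 0 < b - a := by linarith
  set H : ℝ → ENNReal := fun c => ∫⁻ u, ENNReal.ofReal (f u * f (u + c)) with hHdef
  -- the inner integral evaluates
  have hm0 : ∀ σ : ℝ, 0 < σ → 0 ≤ min C (2*K/dd*σ) := fun σ hσ =>
    le_min hC0 (by positivity)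
  have hc0 : ∀ σ : ℝ, 0 < σ → 0 ≤ B * (σ⁻¹)^(k+3) * (min C (2*K/dd*σ))^k := by
    intro σ hσ
    have := hm0 σ hσ
    positivity
  have hstep1 : ∀ σ : ℝ, 0 < σ →
      (∫⁻ μ, ENNReal.ofReal (B * (σ⁻¹)^(k+3) * (min C (2*K/dd*σ))^k *
        (f ((a-μ)/σ) * f ((b-μ)/σ))))
      = ENNReal.ofReal (B * (σ⁻¹)^(k+3) * (min C (2*K/dd*σ))^k * σ) * H ((b-a)/σ) := by
    intro σ hσ
    have h1 : ∀ μ : ℝ, ENNReal.ofReal (B * (σ⁻¹)^(k+3) * (min C (2*K/dd*σ))^k *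
        (f ((a-μ)/σ) * f ((b-μ)/σ)))
        = ENNReal.ofReal (B * (σ⁻¹)^(k+3) * (min C (2*K/dd*σ))^k) *
          ENNReal.ofReal (f ((a-μ)/σ) * f ((b-μ)/σ)) := fun μ =>
      ENNReal.ofReal_mul (hc0 σ hσ)
    simp only [h1]
    rw [lintegral_const_mul' _ _ ENNReal.ofReal_ne_top]
    have h2 : (∫⁻ μ, ENNReal.ofReal (f ((a-μ)/σ) * f ((b-μ)/σ)))
        = ENNReal.ofReal σ * H ((b-a)/σ) := by
      rw [auxA a σ hσ (fun μ => ENNReal.ofReal (f ((a-μ)/σ) * f ((b-μ)/σ)))]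
      congr 1
      apply lintegral_congr
      intro u
      have e1 : (a - (a - σ * u))/σ = u := by field_simp; ring
      have e2 : (b - (a - σ * u))/σ = u + (b-a)/σ := by field_simp; ring
      rw [e1, e2]
    rw [h2, ← mul_assoc, ← ENNReal.ofReal_mul (hc0 σ hσ)]
  rw [setLIntegral_congr_fun measurableSet_Ioi
    (fun σ hσ => hstep1 σ hσ)]
  -- split the domain
  have hsplit : Set.Ioi (0:ℝ) = Set.Ioc 0 1 ∪ Set.Ioi 1 := (Set.Ioc_union_Ioi_eq_Ioi zero_le_one).symm
  rw [hsplit, lintegral_union measurableSet_Ioi Set.Ioc_disjoint_Ioi_same]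
  have hHC : ∀ c : ℝ, H c ≤ ENNReal.ofReal C := by
    intro c
    calc H c ≤ ∫⁻ u, ENNReal.ofReal (C * f u) := by
          apply lintegral_mono
          intro u
          apply ENNReal.ofReal_le_ofReal
          calc f u * f (u + c) ≤ f u * C := by
                apply mul_le_mul_of_nonneg_left (hC _) (hf0 u)
            _ = C * f u := mul_comm _ _
      _ = ENNReal.ofReal C * ∫⁻ u, ENNReal.ofReal (f u) := by
          rw [← lintegral_const_mul' _ _ ENNReal.ofReal_ne_top]
          congr 1 with u
          rw [ENNReal.ofReal_mul hC0]
      _ = ENNReal.ofReal C := by rw [hlint1, mul_one]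
  -- Part 2 : large sigma
  have hint2 : (∫⁻ σ in Set.Ioi (1:ℝ), ENNReal.ofReal (σ⁻¹ * σ⁻¹)) < ⊤ := by
    have hint : IntegrableOn (fun σ : ℝ => σ ^ (-2:ℝ)) (Set.Ioi 1) :=
      integrableOn_Ioi_rpow_of_lt (by norm_num) one_pos
    have h := hint.lintegral_lt_top
    have he : ∫⁻ σ in Set.Ioi (1:ℝ), ENNReal.ofReal (σ⁻¹ * σ⁻¹)
        = ∫⁻ σ in Set.Ioi (1:ℝ), ENNReal.ofReal (σ ^ (-2:ℝ)) := by
      apply setLIntegral_congr_fun measurableSet_Ioi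
      intro σ hσ
      dsimp only
      have hσ0 : (0:ℝ) < σ := lt_trans one_pos hσ
      congr 1
      rw [Real.rpow_neg hσ0.le, show (2:ℝ) = ((2:ℕ):ℝ) by norm_num, Real.rpow_natCast]
      rw [sq, mul_inv]
    rw [he]; exact h
  have part2 : (∫⁻ σ in Set.Ioi (1:ℝ), ENNReal.ofReal (B * (σ⁻¹)^(k+3) *
      (min C (2*K/dd*σ))^k * σ) * H ((b-a)/σ)) < ⊤ := by
    have hb : ∀ σ ∈ Set.Ioi (1:ℝ), ENNReal.ofReal (B * (σ⁻¹)^(k+3) *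
        (min C (2*K/dd*σ))^k * σ) * H ((b-a)/σ)
        ≤ ENNReal.ofReal (B * C^(k+1)) * ENNReal.ofReal (σ⁻¹ * σ⁻¹) := by
      intro σ hσ
      have hσ1 : (1:ℝ) < σ := hσ
      have hσ0 : (0:ℝ) < σ := lt_trans one_pos hσ1
      have hreal : B * (σ⁻¹)^(k+3) * (min C (2*K/dd*σ))^k * σ * C
          ≤ B * C^(k+1) * (σ⁻¹ * σ⁻¹) := by
        have hm : (min C (2*K/dd*σ))^k ≤ C^k :=
          pow_le_pow_left₀ (hm0 σ hσ0) (min_le_left _ _) k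
        have h1 : (σ⁻¹)^(k+3) * σ = (σ⁻¹)^(k+2) := by
          rw [pow_succ, mul_assoc, inv_mul_cancel₀ (ne_of_gt hσ0), mul_one]
        have h2 : (σ⁻¹)^(k+2) ≤ σ⁻¹ * σ⁻¹ := by
          have := pow_le_pow_of_le_one (inv_nonneg.mpr hσ0.le)
            (inv_le_one_of_one_le₀ hσ1.le) (show 2 ≤ k+2 by omega)
          calc (σ⁻¹)^(k+2) ≤ (σ⁻¹)^2 := this
            _ = σ⁻¹ * σ⁻¹ := sq σ⁻¹
        calc B * (σ⁻¹)^(k+3) * (min C (2*K/dd*σ))^k * σ * C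
            = (B*C) * (min C (2*K/dd*σ))^k * ((σ⁻¹)^(k+3) * σ) := by ring
          _ ≤ (B*C) * C^k * (σ⁻¹ * σ⁻¹) := by
              rw [h1]
              exact mul_le_mul (mul_le_mul_of_nonneg_left hm (mul_nonneg hB0 hC0)) h2
                (by positivity) (mul_nonneg (mul_nonneg hB0 hC0) (pow_nonneg hC0 k))
          _ = B * C^(k+1) * (σ⁻¹ * σ⁻¹) := by ring
      calc ENNReal.ofReal (B * (σ⁻¹)^(k+3) * (min C (2*K/dd*σ))^k * σ) * H ((b-a)/σ)
          ≤ ENNReal.ofReal (B * (σ⁻¹)^(k+3) * (min C (2*K/dd*σ))^k * σ) *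
            ENNReal.ofReal C := mul_le_mul_right (hHC _) _
        _ = ENNReal.ofReal (B * (σ⁻¹)^(k+3) * (min C (2*K/dd*σ))^k * σ * C) := by
            rw [← ENNReal.ofReal_mul (by have := hm0 σ hσ0; positivity)]
        _ ≤ ENNReal.ofReal (B * C^(k+1) * (σ⁻¹ * σ⁻¹)) := ENNReal.ofReal_le_ofReal hreal
        _ = ENNReal.ofReal (B * C^(k+1)) * ENNReal.ofReal (σ⁻¹ * σ⁻¹) :=
            ENNReal.ofReal_mul (by positivity)
    calc (∫⁻ σ in Set.Ioi (1:ℝ), ENNReal.ofReal (B * (σ⁻¹)^(k+3) *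
        (min C (2*K/dd*σ))^k * σ) * H ((b-a)/σ))
        ≤ ∫⁻ σ in Set.Ioi (1:ℝ), ENNReal.ofReal (B * C^(k+1)) *
          ENNReal.ofReal (σ⁻¹ * σ⁻¹) := setLIntegral_mono' measurableSet_Ioi hb
      _ = ENNReal.ofReal (B * C^(k+1)) * ∫⁻ σ in Set.Ioi (1:ℝ),
          ENNReal.ofReal (σ⁻¹ * σ⁻¹) := lintegral_const_mul' _ _ ENNReal.ofReal_ne_top
      _ < ⊤ := ENNReal.mul_lt_top ENNReal.ofReal_lt_top hint2
  -- Part 1 : small sigma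
  have Tbound : (∫⁻ σ in Set.Ioc (0:ℝ) 1, ENNReal.ofReal (σ⁻¹ * σ⁻¹) * H ((b-a)/σ))
      ≤ ENNReal.ofReal (b-a)⁻¹ := by
    have hmeas : Measurable (fun p : ℝ × ℝ => ENNReal.ofReal (f p.2) *
        ENNReal.ofReal (p.1⁻¹ * p.1⁻¹ * f (p.2 + (b-a)/p.1))) := by
      apply Measurable.mul (f := fun p : ℝ × ℝ => ENNReal.ofReal (f p.2))
        (g := fun p : ℝ × ℝ => ENNReal.ofReal (p.1⁻¹ * p.1⁻¹ * f (p.2 + (b-a)/p.1)))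
      · exact ENNReal.measurable_ofReal.comp (hfm.comp measurable_snd)
      · apply ENNReal.measurable_ofReal.comp
        apply Measurable.mul
        · exact measurable_fst.inv.mul measurable_fst.inv
        · exact hfm.comp (measurable_snd.add (measurable_const.div measurable_fst))
    calc (∫⁻ σ in Set.Ioc (0:ℝ) 1, ENNReal.ofReal (σ⁻¹ * σ⁻¹) * H ((b-a)/σ))
        = ∫⁻ σ in Set.Ioc (0:ℝ) 1, ∫⁻ u, ENNReal.ofReal (f u) *
          ENNReal.ofReal (σ⁻¹ * σ⁻¹ * f (u + (b-a)/σ)) := by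
          apply lintegral_congr
          intro σ
          rw [hHdef]
          simp only
          rw [← lintegral_const_mul' _ _ ENNReal.ofReal_ne_top]
          apply lintegral_congr
          intro u
          rw [← ENNReal.ofReal_mul (mul_self_nonneg σ⁻¹), ← ENNReal.ofReal_mul (hf0 u)]
          congr 1
          ring
      _ = ∫⁻ u, ∫⁻ σ in Set.Ioc (0:ℝ) 1, ENNReal.ofReal (f u) *
          ENNReal.ofReal (σ⁻¹ * σ⁻¹ * f (u + (b-a)/σ)) :=
          lintegral_lintegral_swap hmeas.aemeasurable
      _ = ∫⁻ u, ENNReal.ofReal (f u) * ∫⁻ σ in Set.Ioc (0:ℝ) 1,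
          ENNReal.ofReal (σ⁻¹ * σ⁻¹ * f (u + (b-a)/σ)) := by
          apply lintegral_congr
          intro u
          exact lintegral_const_mul' _ _ ENNReal.ofReal_ne_top
      _ ≤ ∫⁻ u, ENNReal.ofReal (f u) * ENNReal.ofReal (b-a)⁻¹ := by
          apply lintegral_mono
          intro u
          apply mul_le_mul_right
          calc (∫⁻ σ in Set.Ioc (0:ℝ) 1, ENNReal.ofReal (σ⁻¹ * σ⁻¹ * f (u + (b-a)/σ)))
              ≤ ENNReal.ofReal (b-a)⁻¹ * ∫⁻ w, ENNReal.ofReal (f w) := auxB u (b-a) hd' f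
            _ = ENNReal.ofReal (b-a)⁻¹ := by rw [hlint1, mul_one]
      _ = ENNReal.ofReal (b-a)⁻¹ := by
          rw [lintegral_mul_const' _ _ ENNReal.ofReal_ne_top, hlint1, one_mul]
  have part1 : (∫⁻ σ in Set.Ioc (0:ℝ) 1, ENNReal.ofReal (B * (σ⁻¹)^(k+3) *
      (min C (2*K/dd*σ))^k * σ) * H ((b-a)/σ)) < ⊤ := by
    have hb : ∀ σ ∈ Set.Ioc (0:ℝ) 1, ENNReal.ofReal (B * (σ⁻¹)^(k+3) *
        (min C (2*K/dd*σ))^k * σ) * H ((b-a)/σ)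
        ≤ ENNReal.ofReal (B * (2*K/dd)^k) *
          (ENNReal.ofReal (σ⁻¹ * σ⁻¹) * H ((b-a)/σ)) := by
      intro σ hσ
      have hσ0 : (0:ℝ) < σ := hσ.1
      have hreal : B * (σ⁻¹)^(k+3) * (min C (2*K/dd*σ))^k * σ
          ≤ B * (2*K/dd)^k * (σ⁻¹ * σ⁻¹) := by
        have hm : (min C (2*K/dd*σ))^k ≤ (2*K/dd)^k * σ^k := by
          rw [← mul_pow]
          exact pow_le_pow_left₀ (hm0 σ hσ0) (min_le_right _ _) k
        have hkey : (σ⁻¹)^(k+3) * σ^k * σ = σ⁻¹ * σ⁻¹ := by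
          have h1 : (σ⁻¹)^(k+1) * σ^(k+1) = 1 := by
            rw [← mul_pow, inv_mul_cancel₀ (ne_of_gt hσ0), one_pow]
          calc (σ⁻¹)^(k+3) * σ^k * σ
              = (σ⁻¹ * σ⁻¹) * ((σ⁻¹)^(k+1) * σ^(k+1)) := by ring
            _ = σ⁻¹ * σ⁻¹ := by rw [h1, mul_one]
        calc B * (σ⁻¹)^(k+3) * (min C (2*K/dd*σ))^k * σ
            ≤ B * (σ⁻¹)^(k+3) * ((2*K/dd)^k * σ^k) * σ := by
              gcongr
          _ = B * (2*K/dd)^k * ((σ⁻¹)^(k+3) * σ^k * σ) := by ring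
          _ = B * (2*K/dd)^k * (σ⁻¹ * σ⁻¹) := by rw [hkey]
      calc ENNReal.ofReal (B * (σ⁻¹)^(k+3) * (min C (2*K/dd*σ))^k * σ) * H ((b-a)/σ)
          ≤ ENNReal.ofReal (B * (2*K/dd)^k * (σ⁻¹ * σ⁻¹)) * H ((b-a)/σ) :=
            mul_le_mul_left (ENNReal.ofReal_le_ofReal hreal) _
        _ = ENNReal.ofReal (B * (2*K/dd)^k) *
            (ENNReal.ofReal (σ⁻¹ * σ⁻¹) * H ((b-a)/σ)) := by
            rw [ENNReal.ofReal_mul (by positivity), mul_assoc]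
    calc (∫⁻ σ in Set.Ioc (0:ℝ) 1, ENNReal.ofReal (B * (σ⁻¹)^(k+3) *
        (min C (2*K/dd*σ))^k * σ) * H ((b-a)/σ))
        ≤ ∫⁻ σ in Set.Ioc (0:ℝ) 1, ENNReal.ofReal (B * (2*K/dd)^k) *
          (ENNReal.ofReal (σ⁻¹ * σ⁻¹) * H ((b-a)/σ)) :=
          setLIntegral_mono' measurableSet_Ioc hb
      _ = ENNReal.ofReal (B * (2*K/dd)^k) * ∫⁻ σ in Set.Ioc (0:ℝ) 1,
          ENNReal.ofReal (σ⁻¹ * σ⁻¹) * H ((b-a)/σ) :=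
          lintegral_const_mul' _ _ ENNReal.ofReal_ne_top
      _ ≤ ENNReal.ofReal (B * (2*K/dd)^k) * ENNReal.ofReal (b-a)⁻¹ :=
          mul_le_mul_right Tbound _
      _ < ⊤ := ENNReal.mul_lt_top ENNReal.ofReal_lt_top ENNReal.ofReal_lt_top
  exact ENNReal.add_lt_top.mpr ⟨part1, part2⟩



set_option maxHeartbeats 1000000 in
/-- Proposition 5 (Properness of the posterior): in the location–scale model,
with pairwise distinct observations `x₁,…,xₙ` (`n ≥ 2`), the marginal
`m(xₙ) = ∫₀^∞ ∫_ℝ π(μ,σ) ∏ᵢ (1/σ) f((xᵢ−μ)/σ) dμ dσ` is finite, so the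
posterior is proper. -/
theorem statement8 (n : ℕ) (hn : 2 ≤ n) (x : Fin n → ℝ) (hx : Function.Injective x)
    (f : ℝ → ℝ) (hf_cont : Continuous f) (hf_pos : ∀ z : ℝ, 0 < f z)
    (hf_symm : ∀ z : ℝ, f (-z) = f z)
    (hf_int : ∫ z, f z = 1)
    (hf_tail : ∃ M : ℝ, 0 ≤ M ∧ ∀ y z : ℝ, M ≤ |z| → |z| ≤ |y| →
      f y ≤ f z ∧ |y| * f y ≤ |z| * f z)
    (pr : ℝ → ℝ → ℝ) (hpr_nonneg : ∀ μ σ : ℝ, 0 ≤ pr μ σ)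
    (hpr_meas : Measurable (Function.uncurry pr))
    (hpr_bdd : ∃ B : ℝ, ∀ μ σ : ℝ, 0 < σ → σ * pr μ σ ≤ B) :
    (∫⁻ σ in Set.Ioi (0 : ℝ), ∫⁻ μ : ℝ,
      ENNReal.ofReal (pr μ σ * ∏ i, (1 / σ) * f ((x i - μ) / σ))) < ⊤ := by
  obtain ⟨k, rfl⟩ : ∃ k, n = k + 2 := ⟨n - 2, by omega⟩
  have hfm : Measurable f := hf_cont.measurable
  have hf0 : ∀ z, 0 ≤ f z := fun z => (hf_pos z).le
  obtain ⟨M, hM0, htail⟩ := hf_tail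
  set M₁ : ℝ := M + 1 with hM₁def
  have hM₁ : 0 < M₁ := by simp only [hM₁def]; linarith
  -- upper bound C for f
  obtain ⟨z₀, hz₀mem, hz₀max⟩ := isCompact_Icc.exists_isMaxOn (f := f)
    (Set.nonempty_Icc.mpr (by linarith : -M₁ ≤ M₁)) hf_cont.continuousOn
  set C := f z₀ with hCdef
  have hM₁mem : M₁ ∈ Set.Icc (-M₁) M₁ := ⟨by linarith, le_rfl⟩
  have hC : ∀ z, f z ≤ C := by
    intro z
    rcases le_or_gt |z| M₁ with h | h
    · have hzmem : z ∈ Set.Icc (-M₁) M₁ := by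
        rcases abs_le.mp h with ⟨h1, h2⟩; exact ⟨h1, h2⟩
      exact hz₀max hzmem
    · have h1 : M ≤ |M₁| := by rw [abs_of_pos hM₁]; simp only [hM₁def]; linarith
      have h2 : |M₁| ≤ |z| := by rw [abs_of_pos hM₁]; linarith
      have h3 := (htail z M₁ h1 h2).1
      have h4 : f M₁ ≤ C := hz₀max hM₁mem
      linarith
  have hC0 : 0 < C := hf_pos z₀
  -- bound K for |z| f z
  set K := M₁ * C with hKdef
  have hK : ∀ z, |z| * f z ≤ K := by
    intro z
    rcases le_or_gt |z| M₁ with h | h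
    · exact mul_le_mul h (hC z) (hf0 z) hM₁.le
    · have h1 : M ≤ |M₁| := by rw [abs_of_pos hM₁]; simp only [hM₁def]; linarith
      have h2 : |M₁| ≤ |z| := by rw [abs_of_pos hM₁]; linarith
      have h3 := (htail z M₁ h1 h2).2
      rw [abs_of_pos hM₁] at h3
      calc |z| * f z ≤ M₁ * f M₁ := h3
        _ ≤ M₁ * C := mul_le_mul_of_nonneg_left (hC M₁) hM₁.le
  have hK0 : 0 < K := mul_pos hM₁ hC0
  have hfKz : ∀ z : ℝ, z ≠ 0 → f z ≤ K / |z| := by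
    intro z hz
    rw [le_div_iff₀ (abs_pos.mpr hz)]
    calc f z * |z| = |z| * f z := mul_comm _ _
      _ ≤ K := hK z
  -- integral one
  have hfi : Integrable f := by
    by_contra h
    rw [integral_undef h] at hf_int; norm_num at hf_int
  have hlint1 : ∫⁻ z, ENNReal.ofReal (f z) = 1 := by
    rw [← ofReal_integral_eq_lintegral_ofReal hfi (Filter.Eventually.of_forall hf0),
      hf_int, ENNReal.ofReal_one]
  -- the bound B
  obtain ⟨B, hB⟩ := hpr_bdd
  have hB0 : 0 ≤ B :=
    le_trans (by simpa using hpr_nonneg 0 1) (hB 0 1 one_pos)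
  -- minimal gap d
  have h01 : ((0 : Fin (k+2)), (1 : Fin (k+2))) ∈ Finset.univ.offDiag :=
    Finset.mem_offDiag.mpr ⟨Finset.mem_univ _, Finset.mem_univ _, by
      simp [Fin.ext_iff]⟩
  have hPne : (Finset.univ.offDiag : Finset (Fin (k+2) × Fin (k+2))).Nonempty := ⟨_, h01⟩
  set d := Finset.univ.offDiag.inf' hPne
    (fun p : Fin (k+2) × Fin (k+2) => |x p.1 - x p.2|) with hddef
  have hd_le : ∀ i j : Fin (k+2), i ≠ j → d ≤ |x i - x j| := by
    intro i j hij
    have hmem : (i, j) ∈ (Finset.univ.offDiag : Finset (Fin (k+2) × Fin (k+2))) :=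
      Finset.mem_offDiag.mpr ⟨Finset.mem_univ _, Finset.mem_univ _, hij⟩
    exact Finset.inf'_le (fun p : Fin (k+2) × Fin (k+2) => |x p.1 - x p.2|) hmem
  have hd0 : 0 < d := by
    rw [hddef, Finset.lt_inf'_iff]
    intro p hp
    have hne : p.1 ≠ p.2 := (Finset.mem_offDiag.mp hp).2.2
    exact abs_pos.mpr (sub_ne_zero.mpr (fun h => hne (hx h)))
  -- at most one close observation
  have hclose : ∀ μ : ℝ, ∃ i₀ : Fin (k+2), ∀ j, j ≠ i₀ → d/2 ≤ |x j - μ| := by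
    intro μ
    by_cases h : ∃ i, |x i - μ| < d/2
    · obtain ⟨i, hi⟩ := h
      refine ⟨i, fun j hj => ?_⟩
      by_contra hc
      push_neg at hc
      have hlt : |x j - x i| < d := by
        calc |x j - x i| = |(x j - μ) - (x i - μ)| := by congr 1; ring
          _ ≤ |x j - μ| + |x i - μ| := abs_sub _ _
          _ < d/2 + d/2 := add_lt_add hc hi
          _ = d := by ring
      exact absurd (hd_le j i hj) (not_le.mpr hlt)
    · push_neg at h
      exact ⟨0, fun j _ => h j⟩
  have hm0' : ∀ σ : ℝ, 0 < σ → 0 ≤ min C (2*K/d*σ) := fun σ hσ =>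
    le_min hC0.le (mul_nonneg (div_nonneg (by linarith) hd0.le) hσ.le)
  -- product bound
  have hprod : ∀ μ σ : ℝ, 0 < σ → (∏ i, f ((x i - μ)/σ)) ≤
      (min C (2*K/d*σ))^k * ∑ p ∈ Finset.univ.offDiag,
        f ((x p.1 - μ)/σ) * f ((x p.2 - μ)/σ) := by
    intro μ σ hσ
    obtain ⟨i₀, hi₀⟩ := hclose μ
    obtain ⟨j₀, hj₀⟩ := exists_ne i₀
    have hfar : ∀ j : Fin (k+2), j ≠ i₀ → f ((x j - μ)/σ) ≤ min C (2*K/d*σ) := by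
      intro j hj
      refine le_min (hC _) ?_
      have hdist := hi₀ j hj
      have hxj0 : x j - μ ≠ 0 := by
        intro h0; rw [h0] at hdist; simp at hdist; linarith
      have hz : (x j - μ)/σ ≠ 0 := div_ne_zero hxj0 (ne_of_gt hσ)
      calc f ((x j - μ)/σ) ≤ K / |(x j - μ)/σ| := hfKz _ hz
        _ = K * σ / |x j - μ| := by
            rw [abs_div, abs_of_pos hσ, div_div_eq_mul_div]
        _ ≤ K * σ / (d/2) := by
            apply div_le_div_of_nonneg_left (mul_nonneg hK0.le hσ.le) (by linarith) hdist
        _ = 2*K/d*σ := by field_simp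
    have hmemi₀ : i₀ ∈ (Finset.univ : Finset (Fin (k+2))) := Finset.mem_univ _
    have hj₀mem : j₀ ∈ Finset.univ.erase i₀ := Finset.mem_erase.mpr ⟨hj₀, Finset.mem_univ _⟩
    rw [← Finset.mul_prod_erase Finset.univ _ hmemi₀, ← Finset.mul_prod_erase _ _ hj₀mem]
    have hrest : (∏ l ∈ (Finset.univ.erase i₀).erase j₀, f ((x l - μ)/σ))
        ≤ (min C (2*K/d*σ))^k := by
      have hcard : ((Finset.univ.erase i₀).erase j₀).card = k := by
        rw [Finset.card_erase_of_mem hj₀mem, Finset.card_erase_of_mem hmemi₀,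
          Finset.card_univ, Fintype.card_fin]
        omega
      calc (∏ l ∈ (Finset.univ.erase i₀).erase j₀, f ((x l - μ)/σ))
          ≤ (min C (2*K/d*σ))^(((Finset.univ.erase i₀).erase j₀).card) := by
            rw [← Finset.prod_const]
            apply Finset.prod_le_prod (fun l _ => hf0 _)
            intro l hl
            exact hfar l (Finset.mem_erase.mp (Finset.mem_erase.mp hl).2).1
        _ = (min C (2*K/d*σ))^k := by rw [hcard]
    have hpairmem : (i₀, j₀) ∈ (Finset.univ.offDiag : Finset (Fin (k+2) × Fin (k+2))) :=
      Finset.mem_offDiag.mpr ⟨Finset.mem_univ _, Finset.mem_univ _, (Ne.symm hj₀)⟩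
    have hpair : f ((x i₀ - μ)/σ) * f ((x j₀ - μ)/σ) ≤
        ∑ p ∈ Finset.univ.offDiag, f ((x p.1 - μ)/σ) * f ((x p.2 - μ)/σ) :=
      Finset.single_le_sum
        (f := fun p : Fin (k+2) × Fin (k+2) => f ((x p.1 - μ)/σ) * f ((x p.2 - μ)/σ))
        (fun p _ => mul_nonneg (hf0 _) (hf0 _)) hpairmem
    calc f ((x i₀ - μ)/σ) * (f ((x j₀ - μ)/σ) * ∏ l ∈ (Finset.univ.erase i₀).erase j₀,
          f ((x l - μ)/σ))
        = (f ((x i₀ - μ)/σ) * f ((x j₀ - μ)/σ)) *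
          ∏ l ∈ (Finset.univ.erase i₀).erase j₀, f ((x l - μ)/σ) := by ring
      _ ≤ (∑ p ∈ Finset.univ.offDiag, f ((x p.1 - μ)/σ) * f ((x p.2 - μ)/σ)) *
          (min C (2*K/d*σ))^k :=
          mul_le_mul hpair hrest (Finset.prod_nonneg (fun l _ => hf0 _))
            (Finset.sum_nonneg (fun p _ => mul_nonneg (hf0 _) (hf0 _)))
      _ = (min C (2*K/d*σ))^k * ∑ p ∈ Finset.univ.offDiag,
          f ((x p.1 - μ)/σ) * f ((x p.2 - μ)/σ) := mul_comm _ _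
  -- pointwise bound by a finite sum
  have hpt : ∀ σ : ℝ, 0 < σ → ∀ μ : ℝ, pr μ σ * ∏ i, (1/σ) * f ((x i - μ)/σ) ≤
      ∑ p ∈ Finset.univ.offDiag, B * (σ⁻¹)^(k+3) * (min C (2*K/d*σ))^k *
        (f ((x p.1 - μ)/σ) * f ((x p.2 - μ)/σ)) := by
    intro σ hσ μ
    have h1 : (∏ i, (1/σ) * f ((x i - μ)/σ)) = (σ⁻¹)^(k+2) * ∏ i, f ((x i - μ)/σ) := by
      rw [Finset.prod_mul_distrib, Finset.prod_const, Finset.card_univ, Fintype.card_fin,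
        one_div]
    have h2 : pr μ σ ≤ B * σ⁻¹ := by
      rw [← div_eq_mul_inv, le_div_iff₀ hσ]
      calc pr μ σ * σ = σ * pr μ σ := mul_comm _ _
        _ ≤ B := hB μ σ hσ
    calc pr μ σ * ∏ i, (1/σ) * f ((x i - μ)/σ)
        = pr μ σ * ((σ⁻¹)^(k+2) * ∏ i, f ((x i - μ)/σ)) := by rw [h1]
      _ ≤ (B * σ⁻¹) * ((σ⁻¹)^(k+2) * ((min C (2*K/d*σ))^k *
          ∑ p ∈ Finset.univ.offDiag, f ((x p.1 - μ)/σ) * f ((x p.2 - μ)/σ))) := by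
          apply mul_le_mul h2
          · exact mul_le_mul_of_nonneg_left (hprod μ σ hσ)
              (pow_nonneg (inv_nonneg.mpr hσ.le) _)
          · exact mul_nonneg (pow_nonneg (inv_nonneg.mpr hσ.le) _)
              (Finset.prod_nonneg (fun l _ => hf0 _))
          · exact mul_nonneg hB0 (inv_nonneg.mpr hσ.le)
      _ = ∑ p ∈ Finset.univ.offDiag, B * (σ⁻¹)^(k+3) * (min C (2*K/d*σ))^k *
          (f ((x p.1 - μ)/σ) * f ((x p.2 - μ)/σ)) := by
          simp only [Finset.mul_sum]
          apply Finset.sum_congr rfl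
          intro p _
          have hp3 : (σ⁻¹:ℝ)^(k+3) = σ⁻¹ * (σ⁻¹)^(k+2) := by
            rw [pow_succ]; ring
          rw [hp3]; ring
  -- measurability of the bounding functions
  have hΦm : ∀ p : Fin (k+2) × Fin (k+2), Measurable (fun q : ℝ × ℝ =>
      ENNReal.ofReal (B * (q.1⁻¹)^(k+3) * (min C (2*K/d*q.1))^k *
        (f ((x p.1 - q.2)/q.1) * f ((x p.2 - q.2)/q.1)))) := by
    intro p
    apply ENNReal.measurable_ofReal.comp
    apply Measurable.mul
    · apply Measurable.mul
      · exact measurable_const.mul ((measurable_fst.inv).pow_const _)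
      · exact (measurable_const.min (measurable_const.mul measurable_fst)).pow_const _
    · exact (hfm.comp ((measurable_const.sub measurable_snd).div measurable_fst)).mul
        (hfm.comp ((measurable_const.sub measurable_snd).div measurable_fst))
  -- main computation
  calc (∫⁻ σ in Set.Ioi (0 : ℝ), ∫⁻ μ : ℝ,
      ENNReal.ofReal (pr μ σ * ∏ i, (1 / σ) * f ((x i - μ) / σ)))
      ≤ ∫⁻ σ in Set.Ioi (0 : ℝ), ∑ p ∈ Finset.univ.offDiag, ∫⁻ μ : ℝ,
        ENNReal.ofReal (B * (σ⁻¹)^(k+3) * (min C (2*K/d*σ))^k *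
          (f ((x p.1 - μ)/σ) * f ((x p.2 - μ)/σ))) := by
        apply setLIntegral_mono' measurableSet_Ioi
        intro σ hσ
        have hσ0 : (0:ℝ) < σ := hσ
        calc (∫⁻ μ : ℝ, ENNReal.ofReal (pr μ σ * ∏ i, (1 / σ) * f ((x i - μ) / σ)))
            ≤ ∫⁻ μ : ℝ, ∑ p ∈ Finset.univ.offDiag,
              ENNReal.ofReal (B * (σ⁻¹)^(k+3) * (min C (2*K/d*σ))^k *
                (f ((x p.1 - μ)/σ) * f ((x p.2 - μ)/σ))) := by
              apply lintegral_mono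
              intro μ
              calc ENNReal.ofReal (pr μ σ * ∏ i, (1 / σ) * f ((x i - μ) / σ))
                  ≤ ENNReal.ofReal (∑ p ∈ Finset.univ.offDiag, B * (σ⁻¹)^(k+3) *
                    (min C (2*K/d*σ))^k * (f ((x p.1 - μ)/σ) * f ((x p.2 - μ)/σ))) :=
                    ENNReal.ofReal_le_ofReal (hpt σ hσ0 μ)
                _ = ∑ p ∈ Finset.univ.offDiag,
                    ENNReal.ofReal (B * (σ⁻¹)^(k+3) * (min C (2*K/d*σ))^k *
                      (f ((x p.1 - μ)/σ) * f ((x p.2 - μ)/σ))) := by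
                    apply ENNReal.ofReal_sum_of_nonneg
                    intro p _
                    exact mul_nonneg (mul_nonneg (mul_nonneg hB0
                      (pow_nonneg (inv_nonneg.mpr hσ0.le) _))
                      (pow_nonneg (hm0' σ hσ0) _)) (mul_nonneg (hf0 _) (hf0 _))
          _ = ∑ p ∈ Finset.univ.offDiag, ∫⁻ μ : ℝ,
              ENNReal.ofReal (B * (σ⁻¹)^(k+3) * (min C (2*K/d*σ))^k *
                (f ((x p.1 - μ)/σ) * f ((x p.2 - μ)/σ))) := by
              apply lintegral_finset_sum
              intro p _
              apply ENNReal.measurable_ofReal.comp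
              apply Measurable.mul measurable_const
              exact (hfm.comp ((measurable_const.sub measurable_id).div_const σ)).mul
                (hfm.comp ((measurable_const.sub measurable_id).div_const σ))
    _ = ∑ p ∈ Finset.univ.offDiag, ∫⁻ σ in Set.Ioi (0 : ℝ), ∫⁻ μ : ℝ,
        ENNReal.ofReal (B * (σ⁻¹)^(k+3) * (min C (2*K/d*σ))^k *
          (f ((x p.1 - μ)/σ) * f ((x p.2 - μ)/σ))) := by
        apply lintegral_finset_sum
        intro p _
        exact (hΦm p).lintegral_prod_right'
    _ < ⊤ := by
        have hfin : ∀ p : Fin (k+2) × Fin (k+2), p ∈ Finset.univ.offDiag →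
            (∫⁻ σ in Set.Ioi (0 : ℝ), ∫⁻ μ : ℝ,
              ENNReal.ofReal (B * (σ⁻¹)^(k+3) * (min C (2*K/d*σ))^k *
                (f ((x p.1 - μ)/σ) * f ((x p.2 - μ)/σ)))) < ⊤ := by
          intro p hp
          have hne : x p.1 ≠ x p.2 := fun h => (Finset.mem_offDiag.mp hp).2.2 (hx h)
          rcases lt_or_gt_of_ne hne with hlt | hgt
          · exact pairlem f hfm hf0 hlint1 C K d B hC hC0.le hK0.le hd0 hB0 k _ _ hlt
          · have heq : (∫⁻ σ in Set.Ioi (0 : ℝ), ∫⁻ μ : ℝ,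
                ENNReal.ofReal (B * (σ⁻¹)^(k+3) * (min C (2*K/d*σ))^k *
                  (f ((x p.1 - μ)/σ) * f ((x p.2 - μ)/σ))))
                = ∫⁻ σ in Set.Ioi (0 : ℝ), ∫⁻ μ : ℝ,
                ENNReal.ofReal (B * (σ⁻¹)^(k+3) * (min C (2*K/d*σ))^k *
                  (f ((x p.2 - μ)/σ) * f ((x p.1 - μ)/σ))) := by
              apply lintegral_congr
              intro σ
              apply lintegral_congr
              intro μ
              rw [mul_comm (f ((x p.1 - μ)/σ)) _]
            rw [heq]
            exact pairlem f hfm hf0 hlint1 C K d B hC hC0.le hK0.le hd0 hB0 k _ _ hgt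
        exact ENNReal.sum_lt_top.mpr hfin
end

section
/- (Lemma 1.) Let f : ℝ → ℝ be a probability density that is continuous and strictly positive on ℝ, symmetric about the origin, with both tails of f(z) and |z|f(z) monotonic, and such that z f(z) is log-regularly varying at ∞ with index ρ ≥ 1. Then for every λ ≥ 0 and τ ≥ 1 there exists a constant D(λ,τ) ≥ 1 such that for all z ∈ ℝ and all (μ,σ) ∈ [−λ,λ] × [1/τ, τ], one has 1/D(λ,τ) ≤ (1/σ) f((z−μ)/σ)/f(z) ≤ D(λ,τ). -/
open Real Set

set_option maxHeartbeats 1000000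

lemma tail_bound (f : ℝ → ℝ) (hf_pos : ∀ z : ℝ, 0 < f z)
    (ρ : ℝ) (hρ : 1 ≤ ρ) (hLRV : LogRegVarying (fun z => z * f z) ρ)
    (lam τ : ℝ) (hlam : 0 ≤ lam) (hτ : 1 ≤ τ) :
    ∃ Z₀ : ℝ, 0 < Z₀ ∧ ∀ z μ σ : ℝ, Z₀ ≤ z → |μ| ≤ lam → 1 / τ ≤ σ → σ ≤ τ →
      1 / (4 * (2:ℝ) ^ ρ) ≤ 1 / σ * f ((z - μ) / σ) / f z ∧
      1 / σ * f ((z - μ) / σ) / f z ≤ 3 * (2:ℝ) ^ ρ := by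
  obtain ⟨A, hA, hA2⟩ := hLRV (1/2) one_half_pos 2 one_le_two
  refine ⟨A + (τ + lam + 2) ^ 2 + 4 * τ ^ 2, by positivity, ?_⟩
  intro z μ σ hz hμ hσ1 hσ2
  have hτ0 : 0 < τ := lt_of_lt_of_le one_pos hτ
  have hσ0 : 0 < σ := lt_of_lt_of_le (by positivity) hσ1
  have hzA : A ≤ z := by nlinarith [sq_nonneg (τ + lam + 2), sq_nonneg τ]
  have hzsq : (τ + lam + 2) ^ 2 ≤ z := by nlinarith [sq_nonneg τ]
  have hztau : 4 * τ ^ 2 ≤ z := by nlinarith [sq_nonneg (τ + lam + 2)]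
  have hz9 : 9 ≤ z := by nlinarith
  have hz0 : 0 < z := by linarith
  obtain ⟨hμ1, hμ2⟩ := abs_le.mp hμ
  have hlamz : 2 * lam ≤ z := by nlinarith
  have hzm_lb : z / 2 ≤ z - μ := by linarith
  have hzm_ub : z - μ ≤ 2 * z := by linarith
  have hzm0 : 0 < z - μ := by linarith
  set y := (z - μ) / σ with hy
  have hy0 : 0 < y := div_pos hzm0 hσ0
  have hστ : 1 ≤ σ * τ := by
    have := (div_le_iff₀ hτ0).mp hσ1
    linarith
  have hy_lb : z ≤ 2 * τ * y := by
    rw [hy, ← mul_div_assoc, le_div_iff₀ hσ0]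
    nlinarith
  have hy_ub : y ≤ 2 * z * τ := by
    rw [hy, div_le_iff₀ hσ0]
    nlinarith
  have hy2 : z ≤ y ^ 2 := by nlinarith [sq_nonneg (2 * τ * y - z)]
  have hy3 : y ≤ z ^ 2 := by nlinarith
  have hlz : 0 < Real.log z := Real.log_pos (by linarith)
  have hly_lb : Real.log z ≤ 2 * Real.log y := by
    have h := Real.log_le_log hz0 hy2
    rwa [Real.log_pow, Nat.cast_ofNat] at h
  have hly_ub : Real.log y ≤ 2 * Real.log z := by
    have h := Real.log_le_log hy0 hy3
    rwa [Real.log_pow, Nat.cast_ofNat] at h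
  set ν := Real.log y / Real.log z with hν
  have hν1 : 1 / 2 ≤ ν := by rw [hν, le_div_iff₀ hlz]; linarith
  have hν2 : ν ≤ 2 := by rw [hν, div_le_iff₀ hlz]; linarith
  have hzν : z ^ ν = y := by
    rw [Real.rpow_def_of_pos hz0]
    have : Real.log z * ν = Real.log y := by
      rw [hν]; field_simp
    rw [this, Real.exp_log hy0]
  clear_value y ν
  have hmain : |ν ^ ρ * (y * f y) / (z * f z) - 1| < 1/2 := by
    have h := hA2 z hzA ν hν1 hν2
    rw [hzν] at h
    exact h
  obtain ⟨h1', h2'⟩ := abs_lt.mp hmain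
  set p := ν ^ ρ with hp
  have hν0 : 0 < ν := by linarith
  have hp0 : 0 < p := Real.rpow_pos_of_pos hν0 ρ
  have hc0 : 0 < (2:ℝ) ^ ρ := Real.rpow_pos_of_pos two_pos ρ
  have hp_ub : p ≤ (2:ℝ) ^ ρ := Real.rpow_le_rpow hν0.le hν2 (by linarith)
  have hp_lb' : ((2:ℝ) ^ ρ)⁻¹ ≤ p := by
    have h := Real.rpow_le_rpow (by norm_num : (0:ℝ) ≤ 1/2) hν1 (by linarith : (0:ℝ) ≤ ρ)
    rwa [one_div, Real.inv_rpow two_pos.le] at h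
  have hcp : 1 ≤ (2:ℝ) ^ ρ * p := by
    have := mul_le_mul_of_nonneg_left hp_lb' hc0.le
    rwa [mul_inv_cancel₀ hc0.ne'] at this
  set X := ν ^ ρ * (y * f y) / (z * f z) with hX
  have hX1 : 1 / 2 < X := by rw [hX]; linarith
  have hX2 : X < 3 / 2 := by rw [hX]; linarith
  set r := 1 / σ * f y / f z with hr
  have hr0 : 0 < r := by
    rw [hr]
    have := hf_pos y
    have := hf_pos z
    positivity
  have hkey : r * ((z - μ) * p) = X * z := by
    have hfz := (hf_pos z).ne'
    rw [hr, hX, hy]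
    field_simp
    ring
  have hw0 : 0 < z - μ := hzm0
  constructor
  · rw [div_le_iff₀ (by positivity : (0:ℝ) < 4 * (2:ℝ) ^ ρ)]
    have h1 : 1 / 2 * z ≤ X * z := mul_le_mul_of_nonneg_right hX1.le hz0.le
    rw [← hkey] at h1
    have hwp : (z - μ) * p ≤ (2 * z) * ((2:ℝ) ^ ρ) :=
      mul_le_mul hzm_ub hp_ub hp0.le (by positivity)
    have h2 : r * ((z - μ) * p) ≤ r * ((2 * z) * (2:ℝ) ^ ρ) :=
      mul_le_mul_of_nonneg_left hwp hr0.le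
    have h3 : z * 1 ≤ z * (r * (4 * (2:ℝ) ^ ρ)) := by linarith
    exact le_of_mul_le_mul_left h3 hz0
  · have h1 : X * z ≤ 3 / 2 * z := mul_le_mul_of_nonneg_right hX2.le hz0.le
    rw [← hkey] at h1
    have hwp : (z / 2) * p ≤ (z - μ) * p := mul_le_mul_of_nonneg_right hzm_lb hp0.le
    have h2 : r * ((z / 2) * p) ≤ r * ((z - μ) * p) :=
      mul_le_mul_of_nonneg_left hwp hr0.le
    have h3 : z * (r * p) ≤ z * 3 := by linarith
    have h4 : r * p ≤ 3 := le_of_mul_le_mul_left h3 hz0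
    have h5 : r ≤ r * ((2:ℝ) ^ ρ * p) := le_mul_of_one_le_right hr0.le hcp
    have h6 : (2:ℝ) ^ ρ * (r * p) ≤ (2:ℝ) ^ ρ * 3 := mul_le_mul_of_nonneg_left h4 hc0.le
    linarith

/-- Lemma 1: for every `λ ≥ 0`, `τ ≥ 1` there is `D(λ,τ) ≥ 1` with
`1/D ≤ (1/σ) f((z−μ)/σ)/f(z) ≤ D` for all `z ∈ ℝ` and
`(μ,σ) ∈ [−λ,λ] × [1/τ, τ]`. -/
theorem statement9 (f : ℝ → ℝ) (hf_cont : Continuous f) (hf_pos : ∀ z : ℝ, 0 < f z)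
    (hf_symm : ∀ z : ℝ, f (-z) = f z)
    (hf_int : ∫ z, f z = 1)
    (M : ℝ) (hM : 0 ≤ M)
    (hf_tail : ∀ y z : ℝ, M ≤ |z| → |z| ≤ |y| → f y ≤ f z ∧ |y| * f y ≤ |z| * f z)
    (ρ : ℝ) (hρ : 1 ≤ ρ) (hLRV : LogRegVarying (fun z => z * f z) ρ) :
    ∀ lam : ℝ, 0 ≤ lam → ∀ τ : ℝ, 1 ≤ τ →
      ∃ D : ℝ, 1 ≤ D ∧ ∀ z : ℝ, ∀ μ σ : ℝ, |μ| ≤ lam → 1 / τ ≤ σ → σ ≤ τ →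
        1 / D ≤ (1 / σ) * f ((z - μ) / σ) / f z ∧
        (1 / σ) * f ((z - μ) / σ) / f z ≤ D := by
  intro lam hlam τ hτ
  have hτ0 : 0 < τ := lt_of_lt_of_le one_pos hτ
  obtain ⟨Z₀, hZ₀, htail⟩ := tail_bound f hf_pos ρ hρ hLRV lam τ hlam hτ
  -- the compact part
  set K : Set (ℝ × ℝ × ℝ) := Icc (-Z₀) Z₀ ×ˢ Icc (-lam) lam ×ˢ Icc (1/τ) τ with hK
  have hKc : IsCompact K := (isCompact_Icc.prod (isCompact_Icc.prod isCompact_Icc))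
  have hKne : K.Nonempty := by
    refine ⟨(0, 0, 1), ?_⟩
    have h1τ : 1/τ ≤ 1 := by rw [div_le_one hτ0]; exact hτ
    simp only [hK, Set.mem_prod, Set.mem_Icc]
    refine ⟨⟨by linarith, by linarith⟩, ⟨by linarith, by linarith⟩, h1τ, hτ⟩
  set F : ℝ × ℝ × ℝ → ℝ := fun p => 1 / p.2.2 * f ((p.1 - p.2.1) / p.2.2) / f p.1 with hF
  have hσne : ∀ p ∈ K, p.2.2 ≠ 0 := by
    rintro ⟨z, μ, σ⟩ hp
    simp only [hK, Set.mem_prod, Set.mem_Icc] at hp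
    have : 0 < σ := lt_of_lt_of_le (by positivity) hp.2.2.1
    exact this.ne'
  have hcσ : Continuous fun p : ℝ × ℝ × ℝ => p.2.2 := continuous_snd.comp continuous_snd
  have hcμ : Continuous fun p : ℝ × ℝ × ℝ => p.2.1 := continuous_fst.comp continuous_snd
  have hFc : ContinuousOn F K := by
    apply ContinuousOn.div
    · apply ContinuousOn.mul
      · exact continuousOn_const.div hcσ.continuousOn hσne
      · exact hf_cont.comp_continuousOn
          ((continuous_fst.sub hcμ).continuousOn.div hcσ.continuousOn hσne)
    · exact (hf_cont.comp continuous_fst).continuousOn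
    · exact fun p _ => (hf_pos p.1).ne'
  obtain ⟨pmax, hpmaxK, hmax⟩ := hKc.exists_isMaxOn hKne hFc
  obtain ⟨pmin, hpminK, hmin⟩ := hKc.exists_isMinOn hKne hFc
  have hσmin : 0 < pmin.2.2 := by
    have := hσne pmin hpminK
    simp only [hK, Set.mem_prod, Set.mem_Icc] at hpminK
    exact lt_of_lt_of_le (by positivity) hpminK.2.2.1
  have hFmin : 0 < F pmin := by
    rw [hF]
    have := hf_pos ((pmin.1 - pmin.2.1) / pmin.2.2)
    have := hf_pos pmin.1
    positivity
  have hc0 : 0 < (2:ℝ) ^ ρ := Real.rpow_pos_of_pos two_pos ρ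
  have hc1 : 1 ≤ (2:ℝ) ^ ρ := by
    have := Real.rpow_le_rpow (by norm_num : (0:ℝ) ≤ 1) (by norm_num : (1:ℝ) ≤ 2)
      (by linarith : (0:ℝ) ≤ ρ)
    rwa [Real.one_rpow] at this
  refine ⟨max 1 (max (F pmax) (max (1 / F pmin) (4 * (2:ℝ) ^ ρ))), le_max_left _ _, ?_⟩
  set D := max 1 (max (F pmax) (max (1 / F pmin) (4 * (2:ℝ) ^ ρ))) with hD
  have hD0 : 0 < D := lt_of_lt_of_le one_pos (le_max_left _ _)
  have hDmax : F pmax ≤ D := le_trans (le_max_left _ _) (le_max_right _ _)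
  have hDmin : 1 / F pmin ≤ D :=
    le_trans (le_trans (le_max_left _ _) (le_max_right _ _)) (le_max_right _ _)
  have hD4c : 4 * (2:ℝ) ^ ρ ≤ D :=
    le_trans (le_trans (le_max_right _ _) (le_max_right _ _)) (le_max_right _ _)
  intro z μ σ hμ hσ1 hσ2
  have hσ0 : 0 < σ := lt_of_lt_of_le (by positivity) hσ1
  rcases le_or_gt |z| Z₀ with hcase | hcase
  · -- compact case
    have hmem : (z, μ, σ) ∈ K := by
      obtain ⟨h1, h2⟩ := abs_le.mp hcase
      obtain ⟨h3, h4⟩ := abs_le.mp hμ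
      simp only [hK, Set.mem_prod, Set.mem_Icc]
      exact ⟨⟨h1, h2⟩, ⟨h3, h4⟩, hσ1, hσ2⟩
    have hval : F (z, μ, σ) = 1 / σ * f ((z - μ) / σ) / f z := rfl
    constructor
    · have h1 : 1 / D ≤ F pmin := by
        rw [div_le_iff₀ hD0]
        have h2 : 1 / F pmin * F pmin ≤ D * F pmin :=
          mul_le_mul_of_nonneg_right hDmin hFmin.le
        rw [one_div, inv_mul_cancel₀ hFmin.ne'] at h2
        linarith
      calc 1 / D ≤ F pmin := h1
        _ ≤ F (z, μ, σ) := hmin hmem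
        _ = _ := hval
    · calc (1/σ) * f ((z - μ) / σ) / f z = F (z, μ, σ) := hval.symm
        _ ≤ F pmax := hmax hmem
        _ ≤ D := hDmax
  · -- tail case
    have hbound : 1 / (4 * (2:ℝ) ^ ρ) ≤ 1 / σ * f ((z - μ) / σ) / f z ∧
        1 / σ * f ((z - μ) / σ) / f z ≤ 3 * (2:ℝ) ^ ρ := by
      rcases le_or_gt 0 z with hz | hz
      · have : Z₀ ≤ z := by rw [abs_of_nonneg hz] at hcase; exact hcase.le
        exact htail z μ σ this hμ hσ1 hσ2
      · have hz' : Z₀ ≤ -z := by rw [abs_of_neg hz] at hcase; exact hcase.le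
        have hμ' : |-μ| ≤ lam := by rwa [abs_neg]
        have h := htail (-z) (-μ) σ hz' hμ' hσ1 hσ2
        have heq : (-z - -μ) / σ = -((z - μ) / σ) := by ring
        rw [heq, hf_symm, hf_symm] at h
        exact h
    constructor
    · calc 1 / D ≤ 1 / (4 * (2:ℝ) ^ ρ) :=
          one_div_le_one_div_of_le (by positivity) hD4c
        _ ≤ _ := hbound.1
    · calc (1/σ) * f ((z - μ) / σ) / f z ≤ 3 * (2:ℝ) ^ ρ := hbound.2
        _ ≤ 4 * (2:ℝ) ^ ρ := by linarith
        _ ≤ D := hD4c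
end

section
/- (Lemma 2.) Let f : ℝ → ℝ be a probability density that is continuous and strictly positive on ℝ, symmetric about the origin, with both tails of f(z) and |z|f(z) monotonic with monotonicity constant M ≥ 0, and such that z f(z) is log-regularly varying at ∞ with index ρ ≥ 1. Then there exists a constant C > 0 such that for all z with |z| ≥ 2M, sup_{μ ∈ ℝ} f(μ) f(z−μ)/f(z) ≤ C. -/
open Real Set

/-- Lemma 2: there is `C > 0` such that `|z| ≥ 2M` implies
`f(μ) f(z−μ)/f(z) ≤ C` for every `μ ∈ ℝ`. -/
theorem statement10 (f : ℝ → ℝ) (hf_cont : Continuous f) (hf_pos : ∀ z : ℝ, 0 < f z)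
    (hf_symm : ∀ z : ℝ, f (-z) = f z)
    (hf_int : ∫ z, f z = 1)
    (M : ℝ) (hM : 0 ≤ M)
    (hf_tail : ∀ y z : ℝ, M ≤ |z| → |z| ≤ |y| → f y ≤ f z ∧ |y| * f y ≤ |z| * f z)
    (ρ : ℝ) (hρ : 1 ≤ ρ) (hLRV : LogRegVarying (fun z => z * f z) ρ) :
    ∃ C : ℝ, 0 < C ∧ ∀ z : ℝ, 2 * M ≤ |z| → ∀ μ : ℝ,
      f μ * f (z - μ) / f z ≤ C := by
  have habs : ∀ x : ℝ, f x = f |x| := by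
    intro x
    rcases le_or_gt 0 x with h | h
    · rw [abs_of_nonneg h]
    · rw [abs_of_neg h, hf_symm]
  -- global bound on f
  obtain ⟨x₀, hx₀mem, hx₀⟩ := isCompact_Icc.exists_isMaxOn
    (⟨0, by constructor <;> linarith⟩ : (Icc (-M) M).Nonempty) hf_cont.continuousOn
  set B := f x₀ with hBdef
  have hBpos : 0 < B := hf_pos x₀
  have hB : ∀ y : ℝ, f y ≤ B := by
    intro y
    rcases le_or_gt (|y|) M with h | h
    · exact hx₀ (abs_le.mp h)
    · have h1 := (hf_tail y M (by rw [abs_of_nonneg hM]) (by rw [abs_of_nonneg hM]; linarith)).1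
      exact h1.trans (hx₀ ⟨by linarith, le_refl M⟩)
  have hρ0 : (0:ℝ) ≤ ρ := by linarith
  have h2ρ : (0:ℝ) < (2:ℝ) ^ ρ := Real.rpow_pos_of_pos (by norm_num) ρ
  obtain ⟨A, hApos, hA⟩ := hLRV (1/2) (by norm_num) 2 (by norm_num)
  set A₁ := max A 4 with hA₁def
  have hA₁4 : (4:ℝ) ≤ A₁ := le_max_right A 4
  obtain ⟨xM, hxMmem, hxM⟩ := isCompact_Icc.exists_isMaxOn
    (⟨0, by constructor <;> linarith⟩ : (Icc (0:ℝ) A₁).Nonempty) hf_cont.continuousOn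
  obtain ⟨xm, hxmmem, hxm⟩ := isCompact_Icc.exists_isMinOn
    (⟨0, by constructor <;> linarith⟩ : (Icc (0:ℝ) A₁).Nonempty) hf_cont.continuousOn
  have hfm : 0 < f xm := hf_pos xm
  set K := max (3 * (2:ℝ) ^ ρ) (f xM / f xm) with hKdef
  have hKpos : 0 < K := lt_max_of_lt_left (by positivity)
  -- key estimate : f(t/2) ≤ K f(t) for t ≥ 2M
  have key : ∀ t : ℝ, 2 * M ≤ t → f (t/2) ≤ K * f t := by
    intro t ht2M
    have ht0 : 0 ≤ t := by linarith
    rcases le_or_gt t A₁ with hle | hgt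
    · -- compact case
      have h1 : f (t/2) ≤ f xM := hxM ⟨by linarith, by linarith⟩
      have h2 : f xm ≤ f t := hxm ⟨ht0, hle⟩
      have h3 : f (t/2) ≤ (f xM / f xm) * f t := by
        rw [div_mul_eq_mul_div, le_div_iff₀ hfm]
        nlinarith [hf_pos (t/2), hf_pos xM, hf_pos t]
      exact h3.trans (mul_le_mul_of_nonneg_right (le_max_right _ _) (hf_pos t).le)
    · -- LRV case
      have ht4 : 4 ≤ t := le_trans hA₁4 hgt.le
      have htA : A ≤ t := le_trans (le_max_left A 4) hgt.le
      have htpos : 0 < t := by linarith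
      have hlogt : 0 < Real.log t := Real.log_pos (by linarith)
      set ν := Real.log (t/2) / Real.log t with hνdef
      have hlog2 : Real.log (t/2) = Real.log t - Real.log 2 := by
        rw [Real.log_div (by linarith) (by norm_num)]
      have hlog4 : Real.log 4 = 2 * Real.log 2 := by
        rw [show (4:ℝ) = 2^2 by norm_num, Real.log_pow]; push_cast; ring
      have hlogt4 : 2 * Real.log 2 ≤ Real.log t := by
        rw [← hlog4]; exact Real.log_le_log (by norm_num) ht4
      have hlog2pos : 0 < Real.log 2 := Real.log_pos (by norm_num)
      have hν1 : 1/2 ≤ ν := by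
        rw [hνdef, le_div_iff₀ hlogt, hlog2]; linarith
      have hν2 : ν ≤ 1 := by
        rw [hνdef, div_le_one hlogt, hlog2]; linarith
      have htν : t ^ ν = t / 2 := by
        rw [Real.rpow_def_of_pos htpos, hνdef, mul_comm, div_mul_cancel₀ _ (ne_of_gt hlogt),
          Real.exp_log (by linarith)]
      have h := hA t htA ν (by linarith) (by linarith)
      simp only [htν] at h
      have hgt2 : 0 < t * f t := mul_pos htpos (hf_pos t)
      have hg1 : 0 < t/2 * f (t/2) := mul_pos (by linarith) (hf_pos _)
      have hνρ : 0 < ν ^ ρ := Real.rpow_pos_of_pos (by linarith) ρ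
      have hX : ν ^ ρ * (t/2 * f (t/2)) < 3/2 * (t * f t) := by
        have h' := (abs_lt.mp h).2
        rw [sub_lt_iff_lt_add] at h'
        have h'' : ν ^ ρ * (t/2 * f (t/2)) / (t * f t) < 3/2 := by linarith
        exact (div_lt_iff₀ hgt2).mp h''
      have hνρ2 : 1 ≤ ν ^ ρ * 2 ^ ρ := by
        have h12 : (1:ℝ) ≤ ν * 2 := by linarith
        have hh := Real.rpow_le_rpow (by norm_num : (0:ℝ) ≤ 1) h12 hρ0
        rwa [Real.one_rpow, Real.mul_rpow (by linarith) (by norm_num)] at hh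
      have hgoal : f (t/2) ≤ 3 * (2:ℝ) ^ ρ * f t := by
        have hXm := mul_le_mul_of_nonneg_left hX.le h2ρ.le
        have hlow : t/2 * f (t/2) ≤ ν ^ ρ * 2 ^ ρ * (t/2 * f (t/2)) :=
          le_mul_of_one_le_left hg1.le hνρ2
        nlinarith [hf_pos (t/2), hf_pos t, htpos, h2ρ, hνρ]
      exact hgoal.trans (mul_le_mul_of_nonneg_right (le_max_left _ _) (hf_pos t).le)
  refine ⟨B * K, mul_pos hBpos hKpos, ?_⟩
  intro z hz μ
  set t := |z| with htdef
  have ht0 : 0 ≤ t := abs_nonneg z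
  have hfz : f z = f t := habs z
  have hft : 0 < f t := hf_pos t
  have hkey : f (t/2) ≤ K * f t := key t hz
  have htri : t ≤ |μ| + |z - μ| := by
    calc t = |μ + (z - μ)| := by rw [htdef]; ring_nf
    _ ≤ |μ| + |z - μ| := abs_add_le _ _
  rw [hfz, div_le_iff₀ hft]
  rcases le_or_gt (t/2) (|z - μ|) with hb | hb
  · have h1 : f (z - μ) ≤ f (t/2) :=
      (hf_tail (z - μ) (t/2) (by rw [abs_of_nonneg (by linarith)]; linarith)
        (by rw [abs_of_nonneg (by linarith : (0:ℝ) ≤ t/2)]; linarith)).1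
    have h2 : f μ ≤ B := hB μ
    have : f μ * f (z - μ) ≤ B * (K * f t) :=
      mul_le_mul h2 (h1.trans hkey) (hf_pos _).le hBpos.le
    linarith
  · have ha : t/2 ≤ |μ| := by linarith
    have h1 : f μ ≤ f (t/2) :=
      (hf_tail μ (t/2) (by rw [abs_of_nonneg (by linarith)]; linarith)
        (by rw [abs_of_nonneg (by linarith : (0:ℝ) ≤ t/2)]; linarith)).1
    have h2 : f (z - μ) ≤ B := hB (z - μ)
    have : f μ * f (z - μ) ≤ K * f t * B :=
      mul_le_mul (h1.trans hkey) h2 (hf_pos _).le (by positivity)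
    nlinarith
end

section
/- (Normalization of the log-Pareto-tailed symmetric density.) The log-Pareto-tailed symmetric density integrates to one: with α > 1, β > 1, g a density symmetric about the origin, continuous and strictly positive on [−α,α], G(α) = ∫_{−∞}^{α} g(u) du and K = (β−1)/((2G(α)−1)(β−1) + 2 g(α) α log α), one has ∫_ℝ K·( g(z)·1_{[−α,α]}(z) + g(α)·(α/|z|)·(log α / log|z|)^β · 1_{(α,∞)}(|z|) ) dz = 1. -/
open Real Set MeasureTheory

/-- Normalization of the log-Pareto-tailed symmetric density: with `α > 1`,
`β > 1`, `g` a symmetric density continuous and strictly positive on `[−α,α]`,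
`G(α) = ∫_{−∞}^α g` and
`K = (β−1)/((2G(α)−1)(β−1) + 2 g(α) α log α)`, the density
`f(z) = K (g(z) 1_{[−α,α]}(z) + g(α) (α/|z|) (log α/log|z|)^β 1_{(α,∞)}(|z|))`
integrates to one. -/
theorem statement16 (α β : ℝ) (hα : 1 < α) (hβ : 1 < β)
    (g : ℝ → ℝ) (hg_meas : Measurable g) (hg_nonneg : ∀ z : ℝ, 0 ≤ g z)
    (hg_int : ∫ z, g z = 1) (hg_symm : ∀ z : ℝ, g (-z) = g z)
    (hg_cont : ContinuousOn g (Set.Icc (-α) α))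
    (hg_pos : ∀ z ∈ Set.Icc (-α) α, 0 < g z) :
    ∫ z : ℝ,
      ((β - 1) / ((2 * (∫ u in Set.Iic α, g u) - 1) * (β - 1) + 2 * g α * α * Real.log α)) *
        (Set.indicator (Set.Icc (-α) α) g z +
          Set.indicator {w : ℝ | α < |w|}
            (fun w => g α * (α / |w|) * (Real.log α / Real.log |w|) ^ β) z) = 1 := by
  have hα0 : (0:ℝ) < α := lt_trans one_pos hα
  have hgα : 0 < g α := hg_pos α ⟨by linarith, le_rfl⟩
  have hlogα : 0 < Real.log α := Real.log_pos hα
  have hβ1 : (0:ℝ) < β - 1 := by linarith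
  set h₀ : ℝ → ℝ := fun w => g α * (α / |w|) * (Real.log α / Real.log |w|) ^ β with hh₀
  set G := ∫ u in Set.Iic α, g u with hGdef
  -- integrability of g
  have hg_integrable : Integrable g := by
    by_contra h
    rw [MeasureTheory.integral_undef h] at hg_int
    norm_num at hg_int
  -- symmetry : ∫ over Iic (-α) equals ∫ over Ioi α
  have hneg : ∫ u in Set.Iic (-α), g u = ∫ u in Set.Ioi α, g u := by
    have := integral_comp_neg_Iic (-α) g
    simpa [hg_symm] using this
  have hcompl : G + ∫ u in Set.Ioi α, g u = 1 := by
    have := MeasureTheory.integral_add_compl (measurableSet_Iic (a := α)) hg_integrable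
    rwa [compl_Iic, hg_int] at this
  -- the middle integral
  have hIcc : ∫ z in Set.Icc (-α) α, g z = 2 * G - 1 := by
    have hunion : ∫ u in Set.Iic (-α) ∪ Set.Ioc (-α) α, g u
        = (∫ u in Set.Iic (-α), g u) + ∫ u in Set.Ioc (-α) α, g u :=
      MeasureTheory.setIntegral_union (Set.Iic_disjoint_Ioc le_rfl) measurableSet_Ioc
        hg_integrable.integrableOn hg_integrable.integrableOn
    rw [Set.Iic_union_Ioc_eq_Iic (by linarith : -α ≤ α)] at hunion
    have h2 : ∫ z in Set.Icc (-α) α, g z = ∫ z in Set.Ioc (-α) α, g z :=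
      MeasureTheory.integral_Icc_eq_integral_Ioc
    rw [h2]
    rw [hneg] at hunion
    have := hcompl
    linarith [hunion]
  -- FTC on the tail
  set F : ℝ → ℝ := fun x => (Real.log x) ^ (1 - β) / (1 - β) with hF
  have hFd : ∀ x ∈ Set.Ioi α, HasDerivAt F (x⁻¹ * (Real.log x) ^ (-β)) x := by
    intro x hx
    have hx0 : 0 < x := lt_trans hα0 hx
    have hlx : 0 < Real.log x := Real.log_pos (lt_trans hα hx)
    have h1 : HasDerivAt Real.log x⁻¹ x := Real.hasDerivAt_log (ne_of_gt hx0)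
    have h2 : HasDerivAt (fun y => (Real.log y) ^ (1 - β))
        (x⁻¹ * (1 - β) * (Real.log x) ^ (1 - β - 1)) x :=
      h1.rpow_const (Or.inl (ne_of_gt hlx))
    have h3 := h2.div_const (1 - β)
    refine h3.congr_deriv ?_
    have he : 1 - β - 1 = -β := by ring
    have h1β : (1:ℝ) - β ≠ 0 := by linarith
    rw [he]
    field_simp
  have hF0 : ∀ x ∈ Set.Ioi α, 0 ≤ x⁻¹ * (Real.log x) ^ (-β) := by
    intro x hx
    have hx0 : 0 < x := lt_trans hα0 hx
    have hlx : 0 < Real.log x := Real.log_pos (lt_trans hα hx)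
    positivity
  have hFt : Filter.Tendsto F Filter.atTop (nhds 0) := by
    have h1 : Filter.Tendsto (fun x : ℝ => x ^ (1 - β)) Filter.atTop (nhds 0) := by
      have := tendsto_rpow_neg_atTop (by linarith : (0:ℝ) < β - 1)
      simpa [neg_sub] using this
    have := (h1.comp Real.tendsto_log_atTop).div_const (1 - β)
    simpa [hF] using this
  have hFc : ContinuousWithinAt F (Set.Ici α) α := by
    apply ContinuousAt.continuousWithinAt
    have h1 : ContinuousAt Real.log α := Real.continuousAt_log (ne_of_gt hα0)
    have h2 : ContinuousAt (fun y : ℝ => y ^ (1 - β)) (Real.log α) :=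
      Real.continuousAt_rpow_const _ _ (Or.inl (ne_of_gt hlogα))
    exact (h2.comp h1).div_const _
  have hInt : ∫ x in Set.Ioi α, x⁻¹ * (Real.log x) ^ (-β)
      = (Real.log α) ^ (1 - β) / (β - 1) := by
    have h := integral_Ioi_of_hasDerivAt_of_nonneg hFc hFd hF0 hFt
    have h1β : (1:ℝ) - β ≠ 0 := by linarith
    have hβ1' : (β:ℝ) - 1 ≠ 0 := ne_of_gt hβ1
    rw [h, hF]
    field_simp
    ring
  have hIntOn : IntegrableOn (fun x => x⁻¹ * (Real.log x) ^ (-β)) (Set.Ioi α) :=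
    integrableOn_Ioi_deriv_of_nonneg hFc hFd hF0 hFt
  -- rewrite h₀ on Ioi α
  have hcongr : ∀ x ∈ Set.Ioi α,
      (g α * α * (Real.log α) ^ β) * (x⁻¹ * (Real.log x) ^ (-β)) = h₀ x := by
    intro x hx
    have hx0 : 0 < x := lt_trans hα0 hx
    have hlx : 0 < Real.log x := Real.log_pos (lt_trans hα hx)
    rw [hh₀]
    simp only
    rw [abs_of_pos hx0, Real.div_rpow hlogα.le hlx.le, Real.rpow_neg hlx.le,
      div_eq_mul_inv, div_eq_mul_inv]
    ring
  have hTail : ∫ x in Set.Ioi α, h₀ x = g α * α * Real.log α / (β - 1) := by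
    rw [← MeasureTheory.setIntegral_congr_fun measurableSet_Ioi hcongr,
      MeasureTheory.integral_const_mul, hInt]
    have hprod : (Real.log α) ^ β * (Real.log α) ^ (1 - β) = Real.log α := by
      rw [← Real.rpow_add hlogα]
      norm_num
    calc g α * α * Real.log α ^ β * (Real.log α ^ (1 - β) / (β - 1))
        = g α * α * (Real.log α ^ β * Real.log α ^ (1 - β)) / (β - 1) := by ring
      _ = g α * α * Real.log α / (β - 1) := by rw [hprod]
  have hTailInt : IntegrableOn h₀ (Set.Ioi α) :=
    MeasureTheory.IntegrableOn.congr_fun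
      (hIntOn.const_mul (g α * α * (Real.log α) ^ β)) hcongr measurableSet_Ioi
  -- the indicator function on the tail set splits as φ z + φ (-z)
  set φ : ℝ → ℝ := Set.indicator (Set.Ioi α) h₀ with hφdef
  have hφint : Integrable φ := by
    rw [hφdef, MeasureTheory.integrable_indicator_iff measurableSet_Ioi]
    exact hTailInt
  have hφnegint : Integrable (fun z => φ (-z)) := hφint.comp_neg
  have habs : ∀ z : ℝ, h₀ (-z) = h₀ z := by
    intro z
    rw [hh₀]
    simp [abs_neg]
  have hpt : ∀ z : ℝ, Set.indicator {w : ℝ | α < |w|} h₀ z = φ z + φ (-z) := by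
    intro z
    rcases lt_or_ge α z with h1 | h1
    · have hz : z ∈ {w : ℝ | α < |w|} := by
        simp only [Set.mem_setOf_eq, abs_of_pos (lt_trans hα0 h1)]
        exact h1
      have m1 : z ∈ Set.Ioi α := Set.mem_Ioi.mpr h1
      have m2 : -z ∉ Set.Ioi α := by simp only [Set.mem_Ioi, not_lt]; linarith
      rw [Set.indicator_of_mem hz, hφdef, Set.indicator_of_mem m1 h₀,
        Set.indicator_of_notMem m2 h₀]
      ring
    · rcases lt_or_ge α (-z) with h2 | h2
      · have hz : z ∈ {w : ℝ | α < |w|} := by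
          simp only [Set.mem_setOf_eq]
          rw [abs_of_neg (by linarith)]
          exact h2
        have m1 : z ∉ Set.Ioi α := by simp only [Set.mem_Ioi, not_lt]; linarith
        have m2 : -z ∈ Set.Ioi α := Set.mem_Ioi.mpr h2
        rw [Set.indicator_of_mem hz, hφdef, Set.indicator_of_notMem m1 h₀,
          Set.indicator_of_mem m2 h₀, habs]
        ring
      · have hz : z ∉ {w : ℝ | α < |w|} := by
          simp only [Set.mem_setOf_eq, not_lt]
          rw [abs_le]
          constructor <;> linarith
        have m1 : z ∉ Set.Ioi α := by simp only [Set.mem_Ioi, not_lt]; exact h1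
        have m2 : -z ∉ Set.Ioi α := by simp only [Set.mem_Ioi, not_lt]; exact h2
        rw [Set.indicator_of_notMem hz, hφdef, Set.indicator_of_notMem m1 h₀,
          Set.indicator_of_notMem m2 h₀]
        ring
  -- assemble
  have hAint : Integrable (Set.indicator (Set.Icc (-α) α) g) :=
    hg_integrable.indicator measurableSet_Icc
  have hAval : ∫ z, Set.indicator (Set.Icc (-α) α) g z = 2 * G - 1 := by
    rw [MeasureTheory.integral_indicator measurableSet_Icc, hIcc]
  have hφval : ∫ z, φ z = g α * α * Real.log α / (β - 1) := by
    rw [hφdef, MeasureTheory.integral_indicator measurableSet_Ioi, hTail]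
  have hφnegval : ∫ z, φ (-z) = g α * α * Real.log α / (β - 1) := by
    rw [integral_neg_eq_self φ volume, hφval]
  rw [MeasureTheory.integral_const_mul]
  have he : (fun z => Set.indicator (Set.Icc (-α) α) g z
        + Set.indicator {w : ℝ | α < |w|} h₀ z)
      = fun z => Set.indicator (Set.Icc (-α) α) g z + (φ z + φ (-z)) := by
    funext z
    rw [hpt]
  have hsumint : Integrable (fun z => φ z + φ (-z)) := hφint.add hφnegint
  rw [he, MeasureTheory.integral_add hAint hsumint,
    MeasureTheory.integral_add hφint hφnegint, hAval, hφval, hφnegval]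
  -- final arithmetic
  have hIccpos : 0 ≤ 2 * G - 1 := by
    rw [← hIcc]
    exact MeasureTheory.setIntegral_nonneg measurableSet_Icc fun x _ => hg_nonneg x
  have hD : 0 < (2 * G - 1) * (β - 1) + 2 * g α * α * Real.log α := by
    have h1 : 0 ≤ (2 * G - 1) * (β - 1) := mul_nonneg hIccpos hβ1.le
    have h2 : 0 < 2 * g α * α * Real.log α := by positivity
    linarith
  field_simp
  ring
end
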